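/- arXiv:2311.16255 — 3 statements merged into one kernel-verified Lean document; each statement's English description precedes it below -/
import Mathlib

section
/- There exists an absolute constant c > 0 such that for every squarefree positive integer N, every positive divisor ℓ of N, every g ∈ SL₂(ℝ), every δ ∈ (0,1] and every L > 0: if L ≤ c·min{ℓ^{−1/2}, ℓ^{−1}·H(g)^{−1}·δ^{−1/2}}, then R(ℓ;g) ∩ Ω⋆(δ,L) is empty. -/
open MeasureTheory Real Matrix Set

noncomputable section

/-- 2×2 real matrices. -/
abbrev M2 := Matrix (Fin 2) (Fin 2) ℝ

/-- The lattice R(ℓ) = { (a, b; c, d) : a, d ∈ ℤ, b ∈ (1/ℓ)ℤ, c ∈ (N/ℓ)ℤ }. -/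
def Rlat (N ℓ : ℕ) : Set M2 :=
  {γ | (∃ n : ℤ, γ 0 0 = (n : ℝ)) ∧ (∃ n : ℤ, γ 0 1 = (n : ℝ) / ℓ) ∧
       (∃ n : ℤ, γ 1 0 = (n : ℝ) * N / ℓ) ∧ (∃ n : ℤ, γ 1 1 = (n : ℝ))}

/-- The conjugated lattice R(ℓ;g) = g⁻¹ · R(ℓ) · g. -/
def Rconj (N ℓ : ℕ) (g : M2) : Set M2 := {γ | g * γ * g⁻¹ ∈ Rlat N ℓ}

/-- P(γ): half the sum of the squares of the four entries of γ. -/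
def Pfun (γ : M2) : ℝ := ((γ 0 0) ^ 2 + (γ 0 1) ^ 2 + (γ 1 0) ^ 2 + (γ 1 1) ^ 2) / 2

/-- Ω(δ,L) = {γ : P(γ) ≤ L² and P(γ) − det γ ≤ 2δL²}. -/
def OmegaSet (δ L : ℝ) : Set M2 := {γ | Pfun γ ≤ L ^ 2 ∧ Pfun γ - γ.det ≤ 2 * δ * L ^ 2}

/-- Ω⋆(δ,L): nonzero elements of Ω(δ,L). -/
def OmegaStar (δ L : ℝ) : Set M2 := {γ | γ ∈ OmegaSet δ L ∧ γ ≠ 0}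

/-- Ψ(δ,L) = {γ : P(γ) ≤ L² and P(γ) + det γ ≤ 2δL²}. -/
def PsiSet (δ L : ℝ) : Set M2 := {γ | Pfun γ ≤ L ^ 2 ∧ Pfun γ + γ.det ≤ 2 * δ * L ^ 2}

/-- Ψ⋆(δ,L): nonzero elements of Ψ(δ,L). -/
def PsiStar (δ L : ℝ) : Set M2 := {γ | γ ∈ PsiSet δ L ∧ γ ≠ 0}

/-- Möbius action of a 2×2 real matrix on a complex number. -/
def moebius (m : M2) (z : ℂ) : ℂ :=
  ((m 0 0 : ℂ) * z + (m 0 1 : ℂ)) / ((m 1 0 : ℂ) * z + (m 1 1 : ℂ))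

/-- A₀(N): determinant-one matrices of the form Q^{−1/2}·(Qa, b; Nc, Qd)
    with Q a positive divisor of N and a,b,c,d ∈ ℤ. -/
def AtkinLehner (N : ℕ) : Set M2 :=
  {σ | σ.det = 1 ∧ ∃ (Q : ℕ) (a b c d : ℤ), 0 < Q ∧ Q ∣ N ∧
     σ = (Real.sqrt Q)⁻¹ • !![(Q : ℝ) * a, (b : ℝ); (N : ℝ) * c, (Q : ℝ) * d]}

/-- H(g) = sup_{σ ∈ A₀(N)} Im(σ·(g·i)). -/
def Hgt (N : ℕ) (g : M2) : ℝ :=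
  sSup ((fun σ => (moebius σ (moebius g Complex.I)).im) '' AtkinLehner N)

/- ------------------------------------------------------------------ -/
/- Auxiliary lemmas                                                    -/
/- ------------------------------------------------------------------ -/

lemma moeb_im (a b c d : ℝ) (z : ℂ) :
    ((((a:ℂ))*z + (b:ℂ))/(((c:ℂ))*z+(d:ℂ))).im
      = (a*d - b*c) * z.im / Complex.normSq ((c:ℂ)*z+(d:ℂ)) := by
  rw [Complex.div_im]
  simp only [Complex.normSq_apply, Complex.add_re, Complex.add_im, Complex.mul_re,
    Complex.mul_im, Complex.ofReal_re, Complex.ofReal_im]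
  ring

lemma normSq_lin (c d : ℝ) (z : ℂ) :
    Complex.normSq ((c:ℂ)*z+(d:ℂ)) = (c*z.re + d)^2 + (c*z.im)^2 := by
  simp only [Complex.normSq_apply, Complex.add_re, Complex.add_im, Complex.mul_re,
    Complex.mul_im, Complex.ofReal_re, Complex.ofReal_im]
  ring

lemma moebius_im_eq (σ : M2) (hdet : σ.det = 1) (z : ℂ) :
    (moebius σ z).im = z.im / ((σ 1 0 * z.re + σ 1 1)^2 + (σ 1 0 * z.im)^2) := by
  rw [moebius, moeb_im, normSq_lin]
  rw [Matrix.det_fin_two] at hdet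
  rw [hdet, one_mul]

lemma moebius_I_im (p q r s : ℝ) :
    ((((p:ℂ))*Complex.I + (q:ℂ))/(((r:ℂ))*Complex.I + (s:ℂ))).im
      = (p*s - q*r)/(r^2+s^2) := by
  rw [moeb_im, normSq_lin]
  simp [Complex.I_re, Complex.I_im]
  ring_nf

lemma moebius_I_re (p q r s : ℝ) :
    ((((p:ℂ))*Complex.I + (q:ℂ))/(((r:ℂ))*Complex.I + (s:ℂ))).re
      = (p*r + q*s)/(r^2+s^2) := by
  rw [Complex.div_re]
  simp only [Complex.normSq_apply, Complex.add_re, Complex.add_im, Complex.mul_re,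
    Complex.mul_im, Complex.ofReal_re, Complex.ofReal_im, Complex.I_re, Complex.I_im]
  ring_nf

lemma inv_eq (g : M2) (hg : g.det = 1) : g⁻¹ = !![g 1 1, -(g 0 1); -(g 1 0), g 0 0] := by
  rw [Matrix.inv_def, hg, Matrix.adjugate_fin_two]
  simp

lemma conj_entries (g : M2) (hg : g.det = 1) (A B C D : ℝ) :
    g⁻¹ * !![A, B; C, D] * g
      = !![(g 1 1 * A - g 0 1 * C) * g 0 0 + (g 1 1 * B - g 0 1 * D) * g 1 0,
           (g 1 1 * A - g 0 1 * C) * g 0 1 + (g 1 1 * B - g 0 1 * D) * g 1 1;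
           (-(g 1 0) * A + g 0 0 * C) * g 0 0 + (-(g 1 0) * B + g 0 0 * D) * g 1 0,
           (-(g 1 0) * A + g 0 0 * C) * g 0 1 + (-(g 1 0) * B + g 0 0 * D) * g 1 1] := by
  rw [inv_eq g hg]
  rw [Matrix.eta_fin_two g]
  ext i j
  fin_cases i <;> fin_cases j <;> simp [Matrix.mul_fin_two] <;> ring

lemma Pfun_explicit (a b c d : ℝ) : Pfun !![a,b;c,d] = (a^2+b^2+c^2+d^2)/2 := by
  simp [Pfun]

lemma PI2 (p q r s A B C : ℝ) (hg : p*s - q*r = 1) (hX : A^2 + B*C = 0) :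
    (((s*A - q*C) * p + (s*B - q*(-A)) * r)^2
   + ((s*A - q*C) * q + (s*B - q*(-A)) * s)^2
   + ((-r*A + p*C) * p + (-r*B + p*(-A)) * r)^2
   + ((-r*A + p*C) * q + (-r*B + p*(-A)) * s)^2) * C^2
      = ((C*q - A*s)^2 + (C*p - A*r)^2)^2 := by
  linear_combination (4*r*s*A*B*C^2 + 4*r*s*A^3*C - 4*q*r*B*C^3 - 4*q*r*A^2*C^2) * hg
    + (s^4*B*C - s^4*A^2 + 4*r*s*A*C + 2*r^2*s^2*B*C - 2*r^2*s^2*A^2 + r^4*B*C - r^4*A^2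
       + 4*q*s^3*A*C - 4*q*r*C^2 + 8*q*r^2*s*A*C - 2*q^2*s^2*C^2 - 4*q^2*r^2*C^2
       + 4*p*r^3*A*C - 2*p^2*r^2*C^2) * hX

lemma PI1 (p q r s A C u V : ℝ) (hg : p*s - q*r = 1) (hAV : A*V = C*u) :
    C^2*((V*(p*r+q*s) - u*(r^2+s^2))^2 + V^2)
      = V^2*((C*q - A*s)^2 + (C*p - A*r)^2)*(r^2+s^2) := by
  linear_combination (-(C^2*V^2) - 2*r*s*C^2*u*V + 2*r*s*A*C*V^2 + q*r*C^2*V^2 - p*s*C^2*V^2) * hg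
    + (-(s^4*C*u) - s^4*A*V + 2*r*s*C*V - 2*r^2*s^2*C*u - 2*r^2*s^2*A*V - r^4*C*u - r^4*A*V
       + 2*q*s^3*C*V + 4*q*r^2*s*C*V + 2*p*r^3*C*V) * hAV

lemma NT (ℓ ℓ' a m k : ℕ) (hsf : Squarefree (ℓ*ℓ')) (hk : 0 < k) (hℓ : 0 < ℓ) (hℓ' : 0 < ℓ')
    (hrel : ℓ * a^2 = m * k * ℓ') :
    (k*ℓ' / Nat.gcd a (k*ℓ'))^2 ∣ k * Nat.gcd (ℓ*ℓ') (k*ℓ' / Nat.gcd a (k*ℓ')) := by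
  rcases Nat.eq_zero_or_pos a with ha | ha
  · subst ha
    rw [Nat.gcd_zero_left, Nat.div_self (by positivity), one_pow]
    exact one_dvd _
  have hm : 0 < m := by
    rcases Nat.eq_zero_or_pos m with hm | hm
    · exfalso
      rw [hm, zero_mul, zero_mul] at hrel
      rcases Nat.mul_eq_zero.mp hrel with h | h
      · omega
      · exact absurd (pow_eq_zero_iff (by norm_num) |>.mp h) (by omega)
    · exact hm
  set t := Nat.gcd a (k*ℓ') with htdef
  have htd : t ∣ k * ℓ' := Nat.gcd_dvd_right _ _
  have ht : 0 < t := Nat.gcd_pos_of_pos_left _ ha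
  set V := (k*ℓ')/t with hVdef
  have hV : 0 < V := Nat.div_pos (Nat.le_of_dvd (by positivity) htd) ht
  have hgcdpos : 0 < Nat.gcd (ℓ*ℓ') V := Nat.gcd_pos_of_pos_left _ (by positivity)
  rw [← Nat.factorization_le_iff_dvd (by positivity) (by positivity)]
  rw [Finsupp.le_def]
  intro p
  have hfrel := congrArg (fun n => n.factorization p) hrel
  simp only [Nat.factorization_mul (by positivity : ℓ ≠ 0) (by positivity : a^2 ≠ 0),
    Nat.factorization_mul (by positivity : m*k ≠ 0) (by positivity : ℓ' ≠ 0),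
    Nat.factorization_mul (by positivity : m ≠ 0) (by positivity : k ≠ 0),
    Nat.factorization_pow, Finsupp.add_apply, Finsupp.smul_apply, smul_eq_mul] at hfrel
  have e1 : (V^2).factorization p = 2 * V.factorization p := by
    rw [Nat.factorization_pow]; simp
  have e2 : (k * Nat.gcd (ℓ*ℓ') V).factorization p
      = k.factorization p + min ((ℓ*ℓ').factorization p) (V.factorization p) := by
    rw [Nat.factorization_mul (by positivity) (by omega),
      Nat.factorization_gcd (by positivity) (by positivity), Finsupp.add_apply,
      Finsupp.inf_apply]
  have e3 : (ℓ*ℓ').factorization p = ℓ.factorization p + ℓ'.factorization p := by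
    rw [Nat.factorization_mul (by positivity) (by positivity), Finsupp.add_apply]
  have e4 : V.factorization p = (k.factorization p + ℓ'.factorization p)
      - min (a.factorization p) (k.factorization p + ℓ'.factorization p) := by
    rw [hVdef, Nat.factorization_div htd, Finsupp.tsub_apply, htdef,
      Nat.factorization_gcd (by positivity) (by positivity), Finsupp.inf_apply,
      Nat.factorization_mul (by positivity) (by positivity), Finsupp.add_apply]
  have hsq : (ℓ*ℓ').factorization p ≤ 1 := hsf.natFactorization_le_one p
  rw [e1, e2, e4] at *
  rw [e3] at *
  omega

lemma one_mem_AL (N : ℕ) : (1 : M2) ∈ AtkinLehner N := by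
  refine ⟨Matrix.det_one, 1, 1, 0, 0, 1, one_pos, one_dvd _, ?_⟩
  norm_num
  exact Matrix.one_fin_two

lemma moebius_one (z : ℂ) : moebius 1 z = z := by
  simp [moebius, Matrix.one_apply]

set_option maxHeartbeats 1000000 in
lemma AL_im_le (N : ℕ) (hN : 0 < N) (z : ℂ) (hz : 0 < z.im) (σ : M2)
    (hσ : σ ∈ AtkinLehner N) : (moebius σ z).im ≤ max z.im (z.im)⁻¹ := by
  obtain ⟨hdet, Q, a, b, c, d, hQ, hQd, hform⟩ := hσ
  have hQR : (0:ℝ) < Q := by exact_mod_cast hQ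
  have hsQ : (0:ℝ) < Real.sqrt Q := Real.sqrt_pos.mpr hQR
  have hsQ2 : Real.sqrt Q ^ 2 = Q := Real.sq_sqrt (le_of_lt hQR)
  have h10 : σ 1 0 = (Real.sqrt Q)⁻¹ * ((N:ℝ)*c) := by
    rw [hform]; simp [Matrix.smul_apply]
  have h11 : σ 1 1 = (Real.sqrt Q)⁻¹ * ((Q:ℝ)*d) := by
    rw [hform]; simp [Matrix.smul_apply]
  have h00 : σ 0 0 = (Real.sqrt Q)⁻¹ * ((Q:ℝ)*a) := by
    rw [hform]; simp [Matrix.smul_apply]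
  have hIm := moebius_im_eq σ hdet z
  rcases eq_or_ne c 0 with hc | hc
  · -- c = 0 case
    have h10' : σ 1 0 = 0 := by rw [h10, hc]; simp
    have hdet2 : σ 0 0 * σ 1 1 = 1 := by
      have h := Matrix.det_fin_two σ
      rw [hdet, h10'] at h
      nlinarith [h]
    have hZ : (Q:ℤ)*(a*d) = 1 := by
      have h1 : (Q:ℝ)*(a*d) = 1 := by
        rw [h00, h11] at hdet2
        have hss : (Real.sqrt Q)⁻¹ * (Real.sqrt Q)⁻¹ = ((Q:ℝ))⁻¹ := by
          rw [← mul_inv]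
          congr 1
          nlinarith [hsQ2]
        have h2 : (Q:ℝ) * ((Q:ℝ)*((a:ℝ)*d)) = (Q:ℝ) * 1 := by
          have h3 : (Real.sqrt Q)⁻¹ * (Real.sqrt Q)⁻¹ * ((Q:ℝ)*a*((Q:ℝ)*d)) = 1 := by
            linear_combination hdet2
          rw [hss] at h3
          have hQne : (Q:ℝ) ≠ 0 := ne_of_gt hQR
          field_simp at h3
          linear_combination (Q:ℝ) * h3
        exact mul_left_cancel₀ (ne_of_gt hQR) h2
      exact_mod_cast h1
    have hd2 : (1:ℝ) ≤ (d:ℝ)^2 := by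
      have hd0 : d ≠ 0 := by rintro rfl; simp at hZ
      have h1 : (1:ℤ) ≤ |d| := by
        rcases lt_or_gt_of_ne hd0 with h | h
        · rw [abs_of_neg h]; omega
        · rw [abs_of_pos h]; omega
      have h2 : (1:ℤ) ≤ d^2 := by nlinarith [sq_abs d]
      exact_mod_cast h2
    have hQ1 : Q = 1 := by
      have h1 : (Q:ℤ) ∣ 1 := ⟨a*d, hZ.symm⟩
      have := Int.le_of_dvd one_pos h1
      omega
    have hW : (1:ℝ) ≤ (σ 1 0 * z.re + σ 1 1)^2 + (σ 1 0 * z.im)^2 := by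
      rw [h10', h11, hQ1]
      simp [Real.sqrt_one]
      nlinarith [hd2, sq_abs (d:ℝ), abs_nonneg (d:ℝ)]
    rw [hIm]
    exact le_max_of_le_left (div_le_self (le_of_lt hz) hW)
  · -- c ≠ 0 case
    have hc2 : (1:ℝ) ≤ (c:ℝ)^2 := by
      have : (1:ℤ) ≤ c^2 := by
        rcases Int.lt_or_lt_of_ne hc with h | h <;> nlinarith
      exact_mod_cast this
    have hQN : (Q:ℝ) ≤ N := by exact_mod_cast Nat.le_of_dvd hN hQd
    have hNR : (1:ℝ) ≤ (N:ℝ) := by exact_mod_cast hN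
    have hinv2 : ((Real.sqrt Q)⁻¹)^2 = ((Q:ℝ))⁻¹ := by rw [inv_pow, hsQ2]
    have hs10 : (1:ℝ) ≤ (σ 1 0)^2 := by
      have e : (σ 1 0)^2 = ((Q:ℝ))⁻¹ * ((N:ℝ)^2 * (c:ℝ)^2) := by
        rw [h10, mul_pow, hinv2]; ring
      have h2 : (Q:ℝ) ≤ (N:ℝ)^2 * (c:ℝ)^2 := by nlinarith
      calc (1:ℝ) = ((Q:ℝ))⁻¹ * (Q:ℝ) := by field_simp
        _ ≤ ((Q:ℝ))⁻¹ * ((N:ℝ)^2 * (c:ℝ)^2) := by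
            apply mul_le_mul_of_nonneg_left h2 (by positivity)
        _ = (σ 1 0)^2 := e.symm
    have hW2 : z.im^2 ≤ (σ 1 0 * z.re + σ 1 1)^2 + (σ 1 0 * z.im)^2 := by
      nlinarith [sq_nonneg (σ 1 0 * z.re + σ 1 1), sq_nonneg z.im]
    rw [hIm]
    refine le_max_of_le_right ?_
    have hz2 : (0:ℝ) < z.im^2 := by positivity
    calc z.im / ((σ 1 0 * z.re + σ 1 1)^2 + (σ 1 0 * z.im)^2)
        ≤ z.im / z.im^2 := by gcongr
      _ = (z.im)⁻¹ := by
          rw [pow_two, div_mul_eq_div_div, div_self (ne_of_gt hz), one_div]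

lemma bddA (N : ℕ) (hN : 0 < N) (z : ℂ) (hz : 0 < z.im) :
    BddAbove ((fun σ => (moebius σ z).im) '' AtkinLehner N) := by
  refine ⟨max z.im (z.im)⁻¹, ?_⟩
  rintro w ⟨σ, hσ, rfl⟩
  exact AL_im_le N hN z hz σ hσ


set_option maxHeartbeats 2000000 in
lemma LB (N ℓ ℓ' : ℕ) (g : M2) (hsf : Squarefree N) (hN : 0 < N) (hℓ : 0 < ℓ)
    (hℓ' : 0 < ℓ') (hNeq : N = ℓ * ℓ') (hg : g.det = 1) (a m k : ℤ)
    (hrel : (ℓ:ℤ) * a^2 + m * k * ℓ' = 0) (hnz : ¬(a = 0 ∧ m = 0 ∧ k = 0)) :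
    1 ≤ 2 * Pfun (g⁻¹ * !![(a:ℝ), (m:ℝ)/ℓ; (k:ℝ)*N/ℓ, -(a:ℝ)] * g) * ℓ^2 * (Hgt N g)^2 := by
  have hℓR : (0:ℝ) < ℓ := by exact_mod_cast hℓ
  have hℓ'R : (0:ℝ) < ℓ' := by exact_mod_cast hℓ'
  have hNR : (0:ℝ) < N := by exact_mod_cast hN
  set p := g 0 0 with hp
  set q := g 0 1 with hq
  set r := g 1 0 with hr
  set s := g 1 1 with hs
  have hgps : p*s - q*r = 1 := by
    rw [Matrix.det_fin_two] at hg
    linear_combination hg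
  have hD : 0 < r^2 + s^2 := by
    rcases eq_or_ne r 0 with h1 | h1
    · rcases eq_or_ne s 0 with h2 | h2
      · exfalso; rw [h1, h2] at hgps; simp at hgps
      · positivity
    · positivity
  set A : ℝ := (a:ℝ) with hA
  set B : ℝ := (m:ℝ)/ℓ with hB
  set C : ℝ := (k:ℝ)*N/ℓ with hC
  -- the conjugated matrix
  have hconj := conj_entries g hg A B C (-A)
  set e00 : ℝ := (s*A - q*C) * p + (s*B - q*(-A)) * r with he00
  set e01 : ℝ := (s*A - q*C) * q + (s*B - q*(-A)) * s with he01
  set e10 : ℝ := (-r*A + p*C) * p + (-r*B + p*(-A)) * r with he10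
  set e11 : ℝ := (-r*A + p*C) * q + (-r*B + p*(-A)) * s with he11
  have hPval : 2 * Pfun (g⁻¹ * !![A, B; C, -A] * g) = e00^2 + e01^2 + e10^2 + e11^2 := by
    rw [hconj, Pfun_explicit]
    rw [he00, he01, he10, he11]
    ring
  -- the point z = g·i
  set z : ℂ := moebius g Complex.I with hzdef
  have hzre : z.re = (p*r + q*s)/(r^2+s^2) := by
    rw [hzdef, moebius]; exact moebius_I_re p q r s
  have hzim : z.im = 1/(r^2+s^2) := by
    rw [hzdef, moebius, moebius_I_im, hgps]
  have hzpos : 0 < z.im := by rw [hzim]; positivity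
  have hyleH : z.im ≤ Hgt N g := by
    apply le_csSup (bddA N hN z hzpos)
    exact ⟨1, one_mem_AL N, by show (moebius 1 z).im = z.im; rw [moebius_one]⟩
  have hH : 0 < Hgt N g := lt_of_lt_of_le hzpos hyleH
  set H := Hgt N g with hHdef
  -- case k = 0
  rcases eq_or_ne k 0 with hk | hk
  · have ha0 : a = 0 := by
      have : (ℓ:ℤ) * a^2 = 0 := by rw [hk] at hrel; linarith [hrel]
      rcases mul_eq_zero.mp this with h | h
      · exfalso; omega
      · exact pow_eq_zero_iff (by norm_num) |>.mp h
    have hm0 : m ≠ 0 := by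
      intro hm; exact hnz ⟨ha0, hm, hk⟩
    have hA0 : A = 0 := by rw [hA, ha0]; norm_num
    have hC0 : C = 0 := by rw [hC, hk]; norm_num
    have hPB : 2 * Pfun (g⁻¹ * !![A, B; C, -A] * g) = B^2 * (r^2+s^2)^2 := by
      rw [hPval, he00, he01, he10, he11, hA0, hC0]; ring
    have hBge : 1/(ℓ:ℝ)^2 ≤ B^2 := by
      rw [hB]
      have h1 : (1:ℝ) ≤ (m:ℝ)^2 := by
        have h3 : (1:ℤ) ≤ m^2 := by
          have h2 : (1:ℤ) ≤ |m| := by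
            rcases lt_or_gt_of_ne hm0 with h | h
            · rw [abs_of_neg h]; omega
            · rw [abs_of_pos h]; omega
          nlinarith only [sq_abs m, h2]
        exact_mod_cast h3
      rw [div_pow]
      gcongr
    have hDH : 1 ≤ H * (r^2+s^2) := by
      have he : z.im * (r^2+s^2) = 1 := by rw [hzim]; field_simp
      nlinarith only [hyleH, hD, he]
    have h1 : 1 ≤ B^2 * (ℓ:ℝ)^2 := by
      rw [div_le_iff₀ (by positivity)] at hBge
      linarith only [hBge]
    have hDH2 : 1 ≤ (H*(r^2+s^2))^2 := by nlinarith only [hDH]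
    have hfin : 1 ≤ (B^2*(ℓ:ℝ)^2) * ((H*(r^2+s^2))^2) := by nlinarith only [h1, hDH2]
    have heq : 2 * Pfun (g⁻¹ * !![A, B; C, -A] * g) * (ℓ:ℝ)^2 * H^2
        = (B^2*(ℓ:ℝ)^2) * ((H*(r^2+s^2))^2) := by
      linear_combination ((ℓ:ℝ)^2*H^2) * hPB
    linarith only [hfin, heq]
  -- case k ≠ 0
  · set K : ℤ := k * (ℓ':ℤ) with hKdef
    have hK : K ≠ 0 := mul_ne_zero hk (by exact_mod_cast hℓ'.ne')
    have hCK : C = (K:ℝ) := by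
      rw [hC, hKdef, hNeq]
      push_cast
      field_simp
    have hCne : C ≠ 0 := by
      rw [hCK]
      exact_mod_cast hK
    have hrelR : (ℓ:ℝ) * (a:ℝ)^2 + (m:ℝ) * (k:ℝ) * (ℓ':ℝ) = 0 := by exact_mod_cast hrel
    have hXrel : A^2 + B*C = 0 := by
      rw [hA, hB, hC, hNeq]
      push_cast
      field_simp
      linear_combination hrelR
    -- integer/naturals setup
    set t : ℕ := Nat.gcd a.natAbs K.natAbs with htdef
    set V : ℕ := K.natAbs / t with hVdef
    have htpos : 0 < t := Nat.gcd_pos_of_pos_right _ (Int.natAbs_pos.mpr hK)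
    have htdvdA : t ∣ a.natAbs := Nat.gcd_dvd_left _ _
    have htdvdK : t ∣ K.natAbs := Nat.gcd_dvd_right _ _
    have hVpos : 0 < V :=
      Nat.div_pos (Nat.le_of_dvd (Int.natAbs_pos.mpr hK) htdvdK) htpos
    have hVposR : (0:ℝ) < (V:ℝ) := by exact_mod_cast hVpos
    have htK : t * V = K.natAbs := Nat.mul_div_cancel' htdvdK
    have hta : (t:ℤ) ∣ a := Int.dvd_natAbs.mp (Int.ofNat_dvd.mpr htdvdA)
    obtain ⟨a₂, ha₂⟩ := hta
    set u : ℤ := K.sign * a₂ with hudef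
    have hAVZ : a * (V:ℤ) = K * u := by
      have h1 : K * u = (K.natAbs : ℤ) * a₂ := by
        rw [hudef, ← mul_assoc, Int.mul_sign_self]
      have h2 : (K.natAbs : ℤ) = (t:ℤ) * (V:ℤ) := by exact_mod_cast htK.symm
      rw [h1, h2, ha₂]
      ring
    have hAVr : A * (V:ℝ) = C * (u:ℝ) := by
      rw [hA, hCK]
      exact_mod_cast hAVZ
    have ha₂abs : a₂.natAbs = a.natAbs / t := by
      have h1 : a.natAbs = t * a₂.natAbs := by
        rw [ha₂, Int.natAbs_mul]
        simp
      rw [h1, Nat.mul_div_cancel_left _ htpos]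
    have huabs : u.natAbs = a.natAbs / t := by
      rw [hudef, Int.natAbs_mul, Int.natAbs_sign_of_ne_zero hK, one_mul, ha₂abs]
    have hcopuV : Nat.Coprime u.natAbs V := by
      rw [huabs, hVdef]
      exact Nat.coprime_div_gcd_div_gcd htpos
    -- NT application
    have hkNpos : 0 < k.natAbs := Int.natAbs_pos.mpr hk
    have hZeq : (ℓ:ℤ) * a^2 = ((-m) * k) * (ℓ':ℤ) := by linear_combination hrel
    have hNatEq : ℓ * a.natAbs^2 = m.natAbs * k.natAbs * ℓ' := by
      have h1 := congrArg Int.natAbs hZeq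
      simpa [Int.natAbs_mul, Int.natAbs_pow] using h1
    have hKnat : K.natAbs = k.natAbs * ℓ' := by
      rw [hKdef, Int.natAbs_mul]
      simp
    have hNT : V^2 ∣ k.natAbs * Nat.gcd N V := by
      have h0 := NT ℓ ℓ' a.natAbs m.natAbs k.natAbs (hNeq ▸ hsf) hkNpos hℓ hℓ' hNatEq
      rw [← hKnat] at h0
      rw [← htdef, ← hVdef, ← hNeq] at h0
      exact h0
    set N₁ : ℕ := Nat.gcd N V with hN₁def
    have hN₁pos : 0 < N₁ := Nat.gcd_pos_of_pos_left _ hN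
    have hN₁N : N₁ ∣ N := Nat.gcd_dvd_left _ _
    have hN₁V : N₁ ∣ V := Nat.gcd_dvd_right _ _
    set Q : ℕ := N / N₁ with hQdef
    have hQpos : 0 < Q := Nat.div_pos (Nat.le_of_dvd hN hN₁N) hN₁pos
    have hQdvd : Q ∣ N := Nat.div_dvd_of_dvd hN₁N
    have hQN : Q * N₁ = N := Nat.div_mul_cancel hN₁N
    have hQRpos : (0:ℝ) < (Q:ℝ) := by exact_mod_cast hQpos
    have hQV2 : Q * V^2 ≤ k.natAbs * N := by
      have h1 : V^2 ≤ k.natAbs * N₁ := Nat.le_of_dvd (by positivity) hNT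
      calc Q * V^2 ≤ Q * (k.natAbs * N₁) := Nat.mul_le_mul_left _ h1
        _ = k.natAbs * (Q * N₁) := by ring
        _ = k.natAbs * N := by rw [hQN]
    have hQVcop : Nat.Coprime Q V := by
      have hd1 : Nat.gcd Q V ∣ Q := Nat.gcd_dvd_left _ _
      have hd2 : Nat.gcd Q V ∣ V := Nat.gcd_dvd_right _ _
      have hd3 : Nat.gcd Q V ∣ N₁ := Nat.dvd_gcd (hd1.trans hQdvd) hd2
      have hdd : Nat.gcd Q V * Nat.gcd Q V ∣ N := by
        rw [← hQN]
        exact mul_dvd_mul hd1 hd3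
      exact Nat.isUnit_iff.mp (hsf _ hdd)
    have hQuV : Nat.Coprime (Q * u.natAbs) V := Nat.Coprime.mul hQVcop hcopuV
    have hIC : IsCoprime ((Q:ℤ)*u) (V:ℤ) := by
      rw [Int.isCoprime_iff_gcd_eq_one]
      have : ((Q:ℤ)*u).natAbs = Q * u.natAbs := by
        rw [Int.natAbs_mul]
        simp
      unfold Int.gcd
      rw [this]
      simpa using hQuV
    obtain ⟨x, y', hxy⟩ := hIC
    set a' : ℤ := -x with ha'def
    set b' : ℤ := -y' with hb'def
    set d' : ℤ := -u with hd'def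
    set c' : ℤ := ((V / N₁ : ℕ) : ℤ) with hc'def
    have hNc : (N:ℤ) * c' = (Q:ℤ) * (V:ℤ) := by
      have hnat : N * (V / N₁) = Q * V := by
        rw [← hQN, mul_assoc, Nat.mul_div_cancel' hN₁V]
      rw [hc'def]
      exact_mod_cast hnat
    have hdet1 : (Q:ℤ)*a'*d' - b'*(V:ℤ) = 1 := by
      rw [ha'def, hb'def, hd'def]
      linear_combination hxy
    set M : M2 := !![(Q:ℝ)*(a':ℝ), (b':ℝ); (N:ℝ)*(c':ℝ), (Q:ℝ)*(d':ℝ)] with hMdef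
    set σ : M2 := (Real.sqrt Q)⁻¹ • M with hσdef
    have hsQpos : (0:ℝ) < Real.sqrt Q := Real.sqrt_pos.mpr hQRpos
    have hsQ2 : Real.sqrt Q ^ 2 = (Q:ℝ) := Real.sq_sqrt (le_of_lt hQRpos)
    have hdetM : M.det = (Q:ℝ) := by
      have hZ : (Q:ℤ)*a'*((Q:ℤ)*d') - b'*((N:ℤ)*c') = (Q:ℤ) := by
        rw [hNc]
        linear_combination (Q:ℤ)*hdet1
      rw [hMdef, Matrix.det_fin_two_of]
      push_cast
      exact_mod_cast hZ
    have hdetσ : σ.det = 1 := by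
      rw [hσdef, Matrix.det_smul, hdetM]
      simp only [Fintype.card_fin]
      rw [inv_pow, hsQ2]
      field_simp
    have hσAL : σ ∈ AtkinLehner N := ⟨hdetσ, Q, a', b', c', d', hQpos, hQdvd, by rw [hσdef, hMdef]⟩
    have hσ10 : σ 1 0 = Real.sqrt Q * (V:ℝ) := by
      have h1 : σ 1 0 = (Real.sqrt Q)⁻¹ * ((N:ℝ)*(c':ℝ)) := by
        rw [hσdef, hMdef]
        simp [Matrix.smul_apply]
      have h2 : (N:ℝ)*(c':ℝ) = (Q:ℝ)*(V:ℝ) := by exact_mod_cast hNc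
      rw [h1, h2]
      field_simp
      linear_combination (-1:ℝ) * hsQ2
    have hσ11 : σ 1 1 = Real.sqrt Q * (-(u:ℝ)) := by
      have h1 : σ 1 1 = (Real.sqrt Q)⁻¹ * ((Q:ℝ)*(d':ℝ)) := by
        rw [hσdef, hMdef]
        simp [Matrix.smul_apply]
      have h2 : (d':ℝ) = -(u:ℝ) := by rw [hd'def]; push_cast; ring
      rw [h1, h2]
      field_simp
      linear_combination (u:ℝ) * hsQ2
    have hIm := moebius_im_eq σ hdetσ z
    set W : ℝ := (σ 1 0 * z.re + σ 1 1)^2 + (σ 1 0 * z.im)^2 with hWdef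
    set F : ℝ := (C*q - A*s)^2 + (C*p - A*r)^2 with hFdef
    set S : ℝ := ((V:ℝ)*(p*r+q*s) - (u:ℝ)*(r^2+s^2))^2 + (V:ℝ)^2 with hSdef
    have hSpos : 0 < S := by
      rw [hSdef]
      have h1 : (0:ℝ) < (V:ℝ)^2 := by positivity
      nlinarith only [h1, sq_nonneg ((V:ℝ)*(p*r+q*s) - (u:ℝ)*(r^2+s^2))]
    have hWQ : W = (Q:ℝ) * (((V:ℝ)*z.re - (u:ℝ))^2 + ((V:ℝ)*z.im)^2) := by
      rw [hWdef, hσ10, hσ11]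
      linear_combination (((V:ℝ)*z.re - (u:ℝ))^2 + ((V:ℝ)*z.im)^2) * hsQ2
    have hW2 : W * (r^2+s^2)^2 = (Q:ℝ) * S := by
      rw [hWQ, hzre, hzim, hSdef]
      field_simp
      try tauto
    have hPI1inst : C^2 * S = (V:ℝ)^2 * F * (r^2+s^2) := by
      rw [hSdef, hFdef]
      exact PI1 p q r s A C (u:ℝ) (V:ℝ) hgps hAVr
    have hFpos : 0 < F := by
      rcases lt_or_ge 0 F with h | h
      · exact h
      · exfalso
        rw [hFdef] at h
        have h1 : (C*q - A*s)^2 = 0 :=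
          le_antisymm (by nlinarith only [h, sq_nonneg (C*p - A*r)]) (sq_nonneg _)
        have h2 : (C*p - A*r)^2 = 0 :=
          le_antisymm (by nlinarith only [h, sq_nonneg (C*q - A*s)]) (sq_nonneg _)
        have h1' : C*q - A*s = 0 := pow_eq_zero_iff two_ne_zero |>.mp h1
        have h2' : C*p - A*r = 0 := pow_eq_zero_iff two_ne_zero |>.mp h2
        exact hCne (by linear_combination (-C)*hgps + s*h2' - r*h1')
    have hWpos : 0 < W := by
      have h1 : 0 < (Q:ℝ)*S := mul_pos hQRpos hSpos
      have hD2 : (0:ℝ) < (r^2+s^2)^2 := by positivity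
      nlinarith only [hW2, h1, hD2]
    have hCDW : C^2 * ((r^2+s^2) * W) = (Q:ℝ) * (V:ℝ)^2 * F := by
      have h4 : (C^2 * ((r^2+s^2) * W)) * (r^2+s^2) = ((Q:ℝ)*(V:ℝ)^2*F) * (r^2+s^2) := by
        linear_combination C^2*hW2 + (Q:ℝ)*hPI1inst
      exact mul_right_cancel₀ (ne_of_gt hD) h4
    have hImEq : (moebius σ z).im * ((Q:ℝ) * (V:ℝ)^2 * F) = C^2 := by
      rw [hIm, hzim, ← hCDW]
      field_simp
      try ring
    have hImH : (moebius σ z).im ≤ H := by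
      apply le_csSup (bddA N hN z hzpos)
      exact ⟨σ, hσAL, rfl⟩
    have hQVFpos : (0:ℝ) < (Q:ℝ) * (V:ℝ)^2 * F := by positivity
    have hC2H : C^2 ≤ H * ((Q:ℝ)*(V:ℝ)^2*F) := by
      rw [← hImEq]
      exact mul_le_mul_of_nonneg_right hImH (le_of_lt hQVFpos)
    have hQV2R : (Q:ℝ)*(V:ℝ)^2 ≤ (ℓ:ℝ) * |C| := by
      have h1 : ((Q:ℕ):ℝ)*((V:ℕ):ℝ)^2 ≤ ((k.natAbs:ℕ):ℝ) * ((N:ℕ):ℝ) := by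
        exact_mod_cast hQV2
      have h2 : (ℓ:ℝ) * |C| = (k.natAbs:ℝ) * (N:ℝ) := by
        rw [hC, abs_div, abs_mul, abs_of_pos hNR, abs_of_pos hℓR, Nat.cast_natAbs]
        field_simp
        rw [Int.cast_abs]
      rw [h2]
      exact h1
    have hPC : (2 * Pfun (g⁻¹ * !![A, B; C, -A] * g)) * C^2 = F^2 := by
      rw [hPval, hFdef]
      exact PI2 p q r s A B C hgps hXrel
    -- final assembly
    have h5 : C^2*C^2 ≤ (H*((Q:ℝ)*(V:ℝ)^2*F))*(H*((Q:ℝ)*(V:ℝ)^2*F)) :=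
      mul_self_le_mul_self (sq_nonneg C) hC2H
    have h6 : ((Q:ℝ)*(V:ℝ)^2)*((Q:ℝ)*(V:ℝ)^2) ≤ ((ℓ:ℝ)*|C|)*((ℓ:ℝ)*|C|) :=
      mul_self_le_mul_self (by positivity) hQV2R
    have h7 : ((ℓ:ℝ)*|C|)*((ℓ:ℝ)*|C|) = (ℓ:ℝ)^2*C^2 := by
      rw [← sq_abs C]
      ring
    have h9 : (((Q:ℝ)*(V:ℝ)^2)*((Q:ℝ)*(V:ℝ)^2)) * (H^2*F^2) ≤ ((ℓ:ℝ)^2*C^2)*(H^2*F^2) := by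
      rw [← h7]
      exact mul_le_mul_of_nonneg_right h6 (by positivity)
    have h10 : C^2*C^2 ≤ ((ℓ:ℝ)^2*C^2)*(H^2*F^2) := by nlinarith only [h5, h9]
    have hC4 : (0:ℝ) < C^2*C^2 := by positivity
    have h11 : ((ℓ:ℝ)^2*C^2)*(H^2*F^2)
        = (2 * Pfun (g⁻¹ * !![A, B; C, -A] * g) * (ℓ:ℝ)^2 * H^2)*(C^2*C^2) := by
      linear_combination (-(ℓ:ℝ)^2*H^2*C^2) * hPC
    have h12 : C^2*C^2 ≤ (2 * Pfun (g⁻¹ * !![A, B; C, -A] * g) * (ℓ:ℝ)^2 * H^2)*(C^2*C^2) :=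
      h10.trans_eq h11
    nlinarith only [h12, hC4]

/-- If L is small enough then R(ℓ;g) ∩ Ω⋆(δ,L) is empty. -/
theorem stmt1 : ∃ c : ℝ, 0 < c ∧
    ∀ (N ℓ : ℕ) (g : M2) (δ L : ℝ), Squarefree N → 0 < N → 0 < ℓ → ℓ ∣ N →
    g.det = 1 → 0 < δ → δ ≤ 1 → 0 < L →
    L ≤ c * min (Real.sqrt ℓ)⁻¹ ((ℓ : ℝ)⁻¹ * (Hgt N g)⁻¹ * (Real.sqrt δ)⁻¹) →
    Rconj N ℓ g ∩ OmegaStar δ L = ∅ := by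
  refine ⟨1/4, by norm_num, ?_⟩
  intro N ℓ g δ L hsf hN hℓ hdvd hg hδ hδ1 hL hLe
  rw [Set.eq_empty_iff_forall_notMem]
  rintro γ ⟨hmemR, ⟨hPle, hΩ2⟩, hγne⟩
  obtain ⟨ℓ', hNeq⟩ := hdvd
  have hℓ' : 0 < ℓ' := by
    rcases Nat.eq_zero_or_pos ℓ' with h | h
    · rw [h, mul_zero] at hNeq; omega
    · exact h
  have hℓR : (0:ℝ) < ℓ := by exact_mod_cast hℓ
  have hℓR1 : (1:ℝ) ≤ ℓ := by exact_mod_cast hℓ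
  have hNR : (0:ℝ) < N := by exact_mod_cast hN
  -- H(g) facts
  set H := Hgt N g with hHdef
  have hgu : IsUnit g.det := by rw [hg]; exact isUnit_one
  have hzpos : 0 < (moebius g Complex.I).im := by
    have hgps : g 0 0 * g 1 1 - g 0 1 * g 1 0 = 1 := by
      rw [Matrix.det_fin_two] at hg; linear_combination hg
    have hD : 0 < (g 1 0)^2 + (g 1 1)^2 := by
      rcases eq_or_ne (g 1 0) 0 with h1 | h1
      · rcases eq_or_ne (g 1 1) 0 with h2 | h2
        · exfalso; rw [h1, h2] at hgps; simp at hgps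
        · positivity
      · positivity
    have h := moebius_im_eq g hg Complex.I
    rw [h]
    simp only [Complex.I_re, Complex.I_im]
    have he : (g 1 0 * 0 + g 1 1)^2 + (g 1 0 * 1)^2 = (g 1 0)^2 + (g 1 1)^2 := by ring
    rw [he]
    positivity
  have hH : 0 < H := by
    have h1 : (moebius g Complex.I).im ≤ H := by
      apply le_csSup (bddA N hN _ hzpos)
      exact ⟨1, one_mem_AL N, by
        show (moebius 1 (moebius g Complex.I)).im = _
        rw [moebius_one]⟩
    linarith [hzpos, h1]
  -- smallness of L
  have hsqℓ : Real.sqrt ℓ ^ 2 = (ℓ:ℝ) := Real.sq_sqrt (le_of_lt hℓR)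
  have hsqℓpos : 0 < Real.sqrt ℓ := Real.sqrt_pos.mpr hℓR
  have hsqδ : Real.sqrt δ ^ 2 = δ := Real.sq_sqrt (le_of_lt hδ)
  have hsqδpos : 0 < Real.sqrt δ := Real.sqrt_pos.mpr hδ
  have hL1 : L ≤ (1/4) * (Real.sqrt ℓ)⁻¹ := by
    calc L ≤ (1/4) * min (Real.sqrt ℓ)⁻¹ ((ℓ:ℝ)⁻¹ * H⁻¹ * (Real.sqrt δ)⁻¹) := hLe
      _ ≤ (1/4) * (Real.sqrt ℓ)⁻¹ := by
          apply mul_le_mul_of_nonneg_left (min_le_left _ _) (by norm_num)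
  have hL2 : L^2 * ℓ ≤ 1/16 := by
    have h1 : L^2 ≤ ((1/4) * (Real.sqrt ℓ)⁻¹)^2 := by
      apply pow_le_pow_left₀ (le_of_lt hL) hL1
    have h2 : ((1/4) * (Real.sqrt ℓ)⁻¹)^2 * ℓ = 1/16 := by
      rw [mul_pow, inv_pow, hsqℓ]
      field_simp
      ring
    nlinarith only [h1, h2, hℓR]
  have hL3 : L ≤ (1/4) * ((ℓ:ℝ)⁻¹ * H⁻¹ * (Real.sqrt δ)⁻¹) := by
    calc L ≤ (1/4) * min (Real.sqrt ℓ)⁻¹ ((ℓ:ℝ)⁻¹ * H⁻¹ * (Real.sqrt δ)⁻¹) := hLe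
      _ ≤ _ := by
          apply mul_le_mul_of_nonneg_left (min_le_right _ _) (by norm_num)
  have hL4 : L^2 * (ℓ:ℝ)^2 * H^2 * δ ≤ 1/16 := by
    have h1 : L^2 ≤ ((1/4) * ((ℓ:ℝ)⁻¹ * H⁻¹ * (Real.sqrt δ)⁻¹))^2 := by
      apply pow_le_pow_left₀ (le_of_lt hL) hL3
    have h2 : ((1/4) * ((ℓ:ℝ)⁻¹ * H⁻¹ * (Real.sqrt δ)⁻¹))^2 * ((ℓ:ℝ)^2 * H^2 * δ) = 1/16 := by
      rw [mul_pow, mul_pow, mul_pow, inv_pow, inv_pow, inv_pow, hsqδ]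
      field_simp
      ring
    have h3 : (0:ℝ) < (ℓ:ℝ)^2 * H^2 * δ := by positivity
    calc L^2 * (ℓ:ℝ)^2 * H^2 * δ = L^2 * ((ℓ:ℝ)^2 * H^2 * δ) := by ring
      _ ≤ ((1/4) * ((ℓ:ℝ)⁻¹ * H⁻¹ * (Real.sqrt δ)⁻¹))^2 * ((ℓ:ℝ)^2 * H^2 * δ) := by
          exact mul_le_mul_of_nonneg_right h1 (le_of_lt h3)
      _ = 1/16 := h2
  -- entries of γ' = g γ g⁻¹
  obtain ⟨⟨n0, h00⟩, ⟨m, h01⟩, ⟨k, h10⟩, ⟨n3, h11⟩⟩ := hmemR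
  set γ' : M2 := g * γ * g⁻¹ with hγ'def
  have hγeq : γ = g⁻¹ * γ' * g := by
    rw [hγ'def]
    rw [← Matrix.mul_assoc, ← Matrix.mul_assoc, Matrix.nonsing_inv_mul g hgu, one_mul,
      Matrix.mul_assoc, Matrix.nonsing_inv_mul g hgu, Matrix.mul_one]
  have htr : γ'.trace = γ.trace := by
    rw [hγ'def, Matrix.trace_mul_comm, ← Matrix.mul_assoc, Matrix.nonsing_inv_mul g hgu, one_mul]
  have hdeteq : γ'.det = γ.det := by
    rw [hγ'def, Matrix.det_mul, Matrix.det_mul, hg, Matrix.det_nonsing_inv, hg]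
    simp
  -- trace bound
  have hdet_le : γ.det ≤ Pfun γ := by
    rw [Matrix.det_fin_two, Pfun]
    nlinarith only [sq_nonneg (γ 0 0 - γ 1 1), sq_nonneg (γ 0 1 + γ 1 0)]
  have htr2 : γ.trace^2 ≤ 2*(Pfun γ + γ.det) := by
    rw [Matrix.trace_fin_two, Matrix.det_fin_two, Pfun]
    nlinarith only [sq_nonneg (γ 0 1 - γ 1 0)]
  have hδL : 2*δ*L^2 ≤ 2*L^2 := by nlinarith only [hδ1, sq_nonneg L]
  have hL2' : L^2 ≤ 1/16 := by nlinarith only [hL2, sq_nonneg L, hℓR1]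
  have htrsmall : γ.trace^2 < 1 := by
    have h1 : γ.trace^2 ≤ 8 * L^2 := by nlinarith only [htr2, hΩ2, hdet_le, hPle, hδL]
    nlinarith only [h1, hL2']
  -- trace γ = n0 + n3 as integers
  have htrval : γ.trace = ((n0 + n3 : ℤ) : ℝ) := by
    rw [← htr, Matrix.trace_fin_two, h00, h11]
    push_cast
    ring
  have hn03 : n0 + n3 = 0 := by
    by_contra hne
    have h1 : (1:ℤ) ≤ |n0 + n3| := by
      rcases lt_or_gt_of_ne hne with h | h
      · rw [abs_of_neg h]; omega
      · rw [abs_of_pos h]; omega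
    have h2 : (1:ℝ) ≤ |((n0 + n3 : ℤ):ℝ)| := by exact_mod_cast h1
    rw [htrval] at htrsmall
    nlinarith only [htrsmall, h2, sq_abs ((n0 + n3 : ℤ):ℝ)]
  -- determinant is zero
  have hdetval : γ.det = (n0:ℝ)*(n3:ℝ) - ((m:ℝ)/ℓ)*((k:ℝ)*N/ℓ) := by
    rw [← hdeteq, Matrix.det_fin_two, h00, h01, h10, h11]
  have hEcast : ((ℓ*(n0*n3) - m*k*ℓ' : ℤ):ℝ) = (ℓ:ℝ) * γ.det := by
    rw [hdetval, hNeq]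
    push_cast
    field_simp
  have hdet_ge : -(Pfun γ) ≤ γ.det := by
    rw [Matrix.det_fin_two, Pfun]
    nlinarith only [sq_nonneg (γ 0 0 + γ 1 1), sq_nonneg (γ 0 1 - γ 1 0)]
  have hPnn : 0 ≤ Pfun γ := by
    rw [Pfun]
    positivity
  have hE0 : ℓ*(n0*n3) - m*k*ℓ' = 0 := by
    by_contra hne
    have h1 : (1:ℤ) ≤ |ℓ*(n0*n3) - m*k*ℓ'| := by
      rcases lt_or_gt_of_ne hne with h | h
      · rw [abs_of_neg h]; omega
      · rw [abs_of_pos h]; omega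
    have h2 : (1:ℝ) ≤ |((ℓ*(n0*n3) - m*k*ℓ' : ℤ):ℝ)| := by exact_mod_cast h1
    rw [hEcast, abs_mul, abs_of_pos hℓR] at h2
    have h3 : |γ.det| ≤ L^2 := by
      rw [abs_le]
      constructor
      · linarith [hdet_ge, hPle]
      · linarith [hdet_le, hPle]
    have h4 : (ℓ:ℝ) * |γ.det| ≤ L^2 * ℓ := by
      calc (ℓ:ℝ) * |γ.det| ≤ (ℓ:ℝ) * L^2 := mul_le_mul_of_nonneg_left h3 (le_of_lt hℓR)
        _ = L^2 * ℓ := by ring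
    linarith [h2, h4, hL2]
  have hdet0 : γ.det = 0 := by
    have h1 : (ℓ:ℝ) * γ.det = 0 := by
      rw [← hEcast, hE0]
      simp
    rcases mul_eq_zero.mp h1 with h | h
    · exact absurd h (ne_of_gt hℓR)
    · exact h
  -- relation for LB
  have hn3' : n3 = -n0 := by omega
  have hrelZ : (ℓ:ℤ) * n0^2 + m * k * (ℓ':ℤ) = 0 := by
    rw [hn3'] at hE0
    linear_combination -hE0
  -- γ' is the explicit matrix
  have hγ'mat : γ' = !![(n0:ℝ), (m:ℝ)/ℓ; (k:ℝ)*N/ℓ, -(n0:ℝ)] := by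
    rw [Matrix.eta_fin_two γ', h00, h01, h10, h11, hn3']
    push_cast
    rfl
  have hnz : ¬(n0 = 0 ∧ m = 0 ∧ k = 0) := by
    rintro ⟨hz0, hzm, hzk⟩
    have hz : γ' = 0 := by
      rw [hγ'mat, hz0, hzm, hzk]
      ext i j
      fin_cases i <;> fin_cases j <;> simp
    apply hγne
    rw [hγeq, hz, Matrix.mul_zero, Matrix.zero_mul]
  -- lower bound
  have hLB := LB N ℓ ℓ' g hsf hN hℓ hℓ' hNeq hg n0 m k hrelZ hnz
  rw [← hγ'mat, ← hγeq] at hLB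
  -- upper bound
  have hPf2 : Pfun γ ≤ 2*δ*L^2 := by
    rw [hdet0] at hΩ2
    linarith [hΩ2]
  have hfinal : 2 * Pfun γ * (ℓ:ℝ)^2 * H^2 ≤ 1/4 := by
    have h1 : 2 * Pfun γ * (ℓ:ℝ)^2 * H^2 ≤ 2*(2*δ*L^2) * (ℓ:ℝ)^2 * H^2 := by
      have h2 : (0:ℝ) ≤ (ℓ:ℝ)^2 * H^2 := by positivity
      nlinarith only [hPf2, h2]
    have h3 : 2*(2*δ*L^2) * (ℓ:ℝ)^2 * H^2 = 4 * (L^2 * (ℓ:ℝ)^2 * H^2 * δ) := by ring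
    rw [h3] at h1
    linarith [h1, hL4]
  linarith [hLB, hfinal]
end
end

section
/- There is an absolute constant C > 0 with the following property. Let N be a squarefree positive integer, ℓ a positive divisor of N, δ ∈ (0,1], L > 0, and let z = x + iy ∈ ℍ satisfy Im(σ·z) ≤ y for all σ ∈ A₀(N). Put g = (√y, x/√y; 0, 1/√y) ∈ SL₂(ℝ), so that g·i = z. Then the set R(ℓ;g)⁰ ∩ Ψ(δ,L) is finite with cardinality at most C·(1 + ℓ^{1/2}·L + (ℓ/(N·y))·L²)·(1 + ℓ·y·δ^{1/2}·L). -/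
open MeasureTheory Real Matrix Set

noncomputable section

set_option maxHeartbeats 2000000


lemma count_via_int {X : Type*} (S : Set X) (g : X → ℤ) (hinj : Set.InjOn g S)
    (M : ℝ) (hM : 0 ≤ M) (h : ∀ a ∈ S, ∀ b ∈ S, |(g a : ℝ) - g b| ≤ M) :
    S.Finite ∧ (S.ncard : ℝ) ≤ 2 * M + 3 := by
  rcases S.eq_empty_or_nonempty with rfl | ⟨a₀, ha₀⟩
  · simp; linarith
  have hsub : g '' S ⊆ Set.Icc (g a₀ - ⌈M⌉) (g a₀ + ⌈M⌉) := by
    rintro _ ⟨b, hb, rfl⟩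
    have hM' : (⌈M⌉ : ℝ) ≥ M := Int.le_ceil M
    constructor
    · have : (g a₀ : ℝ) - g b ≤ M := (abs_le.mp (h a₀ ha₀ b hb)).2
      have : ((g a₀ - ⌈M⌉ : ℤ) : ℝ) ≤ ((g b : ℤ) : ℝ) := by push_cast; linarith
      exact_mod_cast this
    · have : (g b : ℝ) - g a₀ ≤ M := (abs_le.mp (h b hb a₀ ha₀)).2
      have : ((g b : ℤ) : ℝ) ≤ ((g a₀ + ⌈M⌉ : ℤ) : ℝ) := by push_cast; linarith
      exact_mod_cast this
  have hfin' : (g '' S).Finite := (Set.finite_Icc _ _).subset hsub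
  have hfin : S.Finite := Set.Finite.of_finite_image hfin' hinj
  refine ⟨hfin, ?_⟩
  have h1 : S.ncard = (g '' S).ncard := (Set.ncard_image_of_injOn hinj).symm
  have h2 : (g '' S).ncard ≤ (Set.Icc (g a₀ - ⌈M⌉) (g a₀ + ⌈M⌉)).ncard :=
    Set.ncard_le_ncard hsub (Set.finite_Icc _ _)
  have h3 : (Set.Icc (g a₀ - ⌈M⌉) (g a₀ + ⌈M⌉)).ncard = ((g a₀ + ⌈M⌉) + 1 - (g a₀ - ⌈M⌉)).toNat := by
    rw [← Finset.coe_Icc, Set.ncard_coe_finset, Int.card_Icc]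
  have hMc : (⌈M⌉ : ℝ) ≤ M + 1 := by
    have := Int.ceil_le_floor_add_one M
    have h2 := Int.floor_le M
    calc (⌈M⌉:ℝ) ≤ (⌊M⌋:ℝ) + 1 := by exact_mod_cast this
    _ ≤ M + 1 := by linarith
  have h4 : (((g a₀ + ⌈M⌉) + 1 - (g a₀ - ⌈M⌉)).toNat : ℝ) ≤ 2 * M + 3 := by
    have : ((g a₀ + ⌈M⌉) + 1 - (g a₀ - ⌈M⌉)) = 2 * ⌈M⌉ + 1 := by ring
    rw [this]
    rcases le_or_gt (2 * ⌈M⌉ + 1) 0 with hle | hlt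
    · rw [Int.toNat_of_nonpos hle]; simp; linarith
    · have h6 : (((2*⌈M⌉+1).toNat : ℤ):ℝ) = 2*(⌈M⌉:ℝ)+1 := by
        rw [Int.toNat_of_nonneg hlt.le]; push_cast; ring
      push_cast at h6 ⊢; linarith
  have h5 : S.ncard ≤ (g a₀ + ⌈M⌉ + 1 - (g a₀ - ⌈M⌉)).toNat := h1 ▸ h3 ▸ h2
  exact le_trans (by exact_mod_cast h5) h4


lemma count_fibers {X Y : Type*} (S : Set X) (hS : S.Finite) (f : X → Y) (A B : ℝ)
    (hA : ((f '' S).ncard : ℝ) ≤ A) (hB : ∀ v : Y, (((S ∩ f ⁻¹' {v}).ncard : ℝ)) ≤ B)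
    (hB0 : 0 ≤ B) : (S.ncard : ℝ) ≤ A * B := by
  classical
  have himg : (f '' S).Finite := hS.image f
  set s : Finset X := hS.toFinset with hs
  set t : Finset Y := himg.toFinset with ht
  have hmem : ∀ x ∈ s, f x ∈ t := by
    intro x hx
    simp only [hs, ht, Set.Finite.mem_toFinset] at *
    exact ⟨x, hx, rfl⟩
  have hcard : s.card = ∑ b ∈ t, (s.filter fun x => f x = b).card :=
    Finset.card_eq_sum_card_fiberwise hmem
  have hfib : ∀ b ∈ t, ((s.filter fun x => f x = b).card : ℝ) ≤ B := by
    intro b _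
    have : ((s.filter fun x => f x = b) : Set X) = S ∩ f ⁻¹' {b} := by
      ext x; simp [hs, Set.Finite.mem_toFinset]
    have hc : (s.filter fun x => f x = b).card = (S ∩ f ⁻¹' {b}).ncard := by
      rw [← Set.ncard_coe_finset, this]
    rw [hc]; exact hB b
  have hSn : S.ncard = s.card := by rw [hs, ← Set.ncard_coe_finset, Set.Finite.coe_toFinset]
  have htn : (f '' S).ncard = t.card := by rw [ht, ← Set.ncard_coe_finset, Set.Finite.coe_toFinset]
  have : (s.card : ℝ) ≤ t.card * B := by
    rw [hcard]
    push_cast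
    calc (∑ b ∈ t, ((s.filter fun x => f x = b).card : ℝ)) ≤ ∑ b ∈ t, B :=
      Finset.sum_le_sum hfib
    _ = t.card * B := by rw [Finset.sum_const]; ring
  rw [hSn]
  calc (s.card : ℝ) ≤ t.card * B := this
  _ ≤ A * B := by
    apply mul_le_mul_of_nonneg_right _ hB0
    rw [← htn]; exact hA

lemma lattice_count (e11 e12 e21 e22 : ℝ) (r R V : ℝ) (hr : 0 < r) (hR : 0 < R)
    (hV : 0 < V) (hVdet : |e11 * e22 - e12 * e21| = V)
    (hmin : ∀ m : ℤ × ℤ, m ≠ (0,0) →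
      r^2 ≤ ((m.1:ℝ)*e11 + (m.2:ℝ)*e21)^2 + ((m.1:ℝ)*e12 + (m.2:ℝ)*e22)^2) :
    {m : ℤ × ℤ | ((m.1:ℝ)*e11 + (m.2:ℝ)*e21)^2 + ((m.1:ℝ)*e12 + (m.2:ℝ)*e22)^2 ≤ R^2}.Finite ∧
    (({m : ℤ × ℤ | ((m.1:ℝ)*e11 + (m.2:ℝ)*e21)^2 + ((m.1:ℝ)*e12 + (m.2:ℝ)*e22)^2 ≤ R^2}.ncard : ℝ) ≤
      9 + 12*R/r + 28*R^2/V) := by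
  set P : Set (ℤ × ℤ) :=
    {m : ℤ × ℤ | ((m.1:ℝ)*e11 + (m.2:ℝ)*e21)^2 + ((m.1:ℝ)*e12 + (m.2:ℝ)*e22)^2 ≤ R^2} with hP
  have hmemP : ∀ m : ℤ × ℤ, m ∈ P ↔
      ((m.1:ℝ)*e11 + (m.2:ℝ)*e21)^2 + ((m.1:ℝ)*e12 + (m.2:ℝ)*e22)^2 ≤ R^2 := by
    intro m; rw [hP]; rfl
  have hVdetsq : (e11 * e22 - e12 * e21)^2 = V^2 := by rw [← hVdet]; exact (sq_abs _).symm
  have hRHS0 : (0:ℝ) ≤ 9 + 12*R/r + 28*R^2/V := by positivity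
  by_cases hex : ∃ n ∈ P, n ≠ ((0:ℤ),(0:ℤ))
  · obtain ⟨⟨k₀, a₀⟩, hn₀P, hn₀⟩ := hex
    rw [hmemP] at hn₀P
    simp only [] at hn₀P
    set d : ℕ := Int.gcd k₀ a₀ with hd
    have hdpos : 0 < d := Int.gcd_pos_iff.mpr (by
      by_contra hcon
      push_neg at hcon
      exact hn₀ (by rw [hcon.1, hcon.2]))
    have hd1 : (1:ℝ) ≤ (d:ℝ) := by exact_mod_cast hdpos
    set k₁ : ℤ := k₀ / d with hk₁
    set a₁ : ℤ := a₀ / d with ha₁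
    have hm₁ : k₁ * d = k₀ := Int.ediv_mul_cancel (Int.gcd_dvd_left _ _)
    have hm₂ : a₁ * d = a₀ := Int.ediv_mul_cancel (Int.gcd_dvd_right _ _)
    have hm₀ne : ¬(k₁ = 0 ∧ a₁ = 0) := by
      rintro ⟨h1, h2⟩
      exact hn₀ (by rw [← hm₁, ← hm₂, h1, h2]; norm_num)
    have hgcd1 : Int.gcd k₁ a₁ = 1 := Int.gcd_div_gcd_div_gcd hdpos
    have hk₁R : (k₀:ℝ) = (k₁:ℝ) * d := by exact_mod_cast hm₁.symm
    have ha₁R : (a₀:ℝ) = (a₁:ℝ) * d := by exact_mod_cast hm₂.symm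
    set lsq : ℝ := ((k₁:ℝ)*e11 + (a₁:ℝ)*e21)^2 + ((k₁:ℝ)*e12 + (a₁:ℝ)*e22)^2 with hlsq
    have hlsq_lb : r^2 ≤ lsq := hmin (k₁, a₁) (by
      intro h0
      exact hm₀ne ⟨congrArg Prod.fst h0, congrArg Prod.snd h0⟩)
    have hlsq0 : (0:ℝ) ≤ lsq := le_trans (sq_nonneg r) hlsq_lb
    have hlsq_ub : lsq ≤ R^2 := by
      have hscale : ((k₀:ℝ)*e11 + (a₀:ℝ)*e21)^2 + ((k₀:ℝ)*e12 + (a₀:ℝ)*e22)^2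
          = (d:ℝ)^2 * lsq := by rw [hk₁R, ha₁R, hlsq]; ring
      have hd2 : (1:ℝ) ≤ (d:ℝ)^2 := by nlinarith [hd1]
      have hstep : lsq ≤ (d:ℝ)^2 * lsq := by
        nlinarith [mul_nonneg (by linarith : (0:ℝ) ≤ (d:ℝ)^2 - 1) hlsq0]
      linarith [hstep, hn₀P, hscale.symm.trans_le hn₀P]
    set lam : ℝ := Real.sqrt lsq with hlam
    have hlsq_pos : 0 < lsq := lt_of_lt_of_le (by positivity) hlsq_lb
    have hlam_pos : 0 < lam := Real.sqrt_pos.mpr hlsq_pos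
    have hlam_sq : lam^2 = lsq := Real.sq_sqrt hlsq_pos.le
    have hlam_lb : r ≤ lam := by
      have h1 := Real.sqrt_le_sqrt hlsq_lb
      rwa [Real.sqrt_sq hr.le] at h1
    have hlam_ub : lam ≤ R := by
      have h1 := Real.sqrt_le_sqrt hlsq_ub
      rwa [Real.sqrt_sq hR.le] at h1
    obtain ⟨w₁, w₂, hw⟩ := Int.isCoprime_iff_gcd_eq_one.mpr hgcd1
    set β : ℤ × ℤ → ℤ := fun n => k₁ * n.2 - a₁ * n.1 with hβ
    set φ : ℤ × ℤ → ℤ := fun n => w₁ * n.1 + w₂ * n.2 with hφ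
    have hβbound : ∀ n ∈ P, |(β n : ℝ)| ≤ lam * R / V := by
      rintro ⟨nk, na⟩ hn
      rw [hmemP] at hn
      simp only [] at hn
      have hβval : (β (nk, na) : ℝ) = (k₁:ℝ) * na - (a₁:ℝ) * nk := by
        rw [hβ]; push_cast; ring
      rw [le_div_iff₀ hV]
      have h2 : ((β (nk,na) : ℝ) * V)^2 ≤ (lam * R)^2 := by
        have hdet : ((k₁:ℝ)*e11 + (a₁:ℝ)*e21) * ((nk:ℝ)*e12 + (na:ℝ)*e22)
            - ((k₁:ℝ)*e12 + (a₁:ℝ)*e22) * ((nk:ℝ)*e11 + (na:ℝ)*e21)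
            = ((k₁:ℝ) * na - (a₁:ℝ) * nk) * (e11 * e22 - e12 * e21) := by ring
        have hlag : (((k₁:ℝ)*e11 + (a₁:ℝ)*e21) * ((nk:ℝ)*e12 + (na:ℝ)*e22)
            - ((k₁:ℝ)*e12 + (a₁:ℝ)*e22) * ((nk:ℝ)*e11 + (na:ℝ)*e21))^2
            ≤ lsq * (((nk:ℝ)*e11 + (na:ℝ)*e21)^2 + ((nk:ℝ)*e12 + (na:ℝ)*e22)^2) := by
          rw [hlsq]
          nlinarith [sq_nonneg (((k₁:ℝ)*e11 + (a₁:ℝ)*e21) * ((nk:ℝ)*e11 + (na:ℝ)*e21)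
            + ((k₁:ℝ)*e12 + (a₁:ℝ)*e22) * ((nk:ℝ)*e12 + (na:ℝ)*e22))]
        have hnn : (0:ℝ) ≤ ((nk:ℝ)*e11 + (na:ℝ)*e21)^2 + ((nk:ℝ)*e12 + (na:ℝ)*e22)^2 := by
          positivity
        calc ((β (nk,na) : ℝ) * V)^2
            = (((k₁:ℝ) * na - (a₁:ℝ) * nk) * (e11 * e22 - e12 * e21))^2 := by
              rw [hβval, mul_pow, mul_pow, hVdetsq]
        _ ≤ lsq * (((nk:ℝ)*e11 + (na:ℝ)*e21)^2 + ((nk:ℝ)*e12 + (na:ℝ)*e22)^2) := by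
              rw [← hdet]; exact hlag
        _ ≤ lsq * R^2 := by nlinarith [hlsq_pos, hn, hnn]
        _ = (lam * R)^2 := by rw [mul_pow, hlam_sq]
      have habs := abs_le_of_sq_le_sq h2 (by positivity)
      rw [abs_mul, abs_of_pos hV] at habs
      exact habs
    have hfiber_struct : ∀ n n' : ℤ × ℤ, β n = β n' → (n.1 - n'.1 = (φ n - φ n') * k₁
        ∧ n.2 - n'.2 = (φ n - φ n') * a₁) := by
      rintro ⟨nk, na⟩ ⟨nk', na'⟩ hβeq
      rw [hβ] at hβeq
      simp only [] at hβeq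
      rw [hφ]
      simp only []
      constructor
      · have h1 : nk - nk' = (w₁ * k₁ + w₂ * a₁) * (nk - nk') := by rw [hw]; ring
        linear_combination h1 - w₂ * hβeq
      · have h1 : na - na' = (w₁ * k₁ + w₂ * a₁) * (na - na') := by rw [hw]; ring
        linear_combination h1 + w₁ * hβeq
    have himgcount := count_via_int (β '' P) (fun i => i) (Set.injOn_id _)
      (2 * (lam * R / V)) (by positivity)
      (by
        rintro _ ⟨n, hn, rfl⟩ _ ⟨n', hn', rfl⟩
        have h1 := hβbound n hn
        have h2 := hβbound n' hn'
        calc |((β n : ℤ):ℝ) - ((β n' : ℤ):ℝ)| ≤ |(β n:ℝ)| + |(β n':ℝ)| := abs_sub _ _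
        _ ≤ 2 * (lam * R / V) := by linarith)
    have hfibcount : ∀ b : ℤ, ((P ∩ β ⁻¹' {b}).Finite ∧
        (((P ∩ β ⁻¹' {b}).ncard : ℝ) ≤ 2 * (2*R/lam) + 3)) := by
      intro b
      apply count_via_int (P ∩ β ⁻¹' {b}) φ
      · intro n hn n' hn' hφeq
        obtain ⟨ha, hb⟩ := hfiber_struct n n' (by rw [hn.2 , hn'.2])
        rw [hφeq, sub_self, zero_mul] at ha hb
        have : n.1 = n'.1 := by omega
        have : n.2 = n'.2 := by omega
        exact Prod.ext (by omega) (by omega)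
      · positivity
      · intro n hn n' hn'
        obtain ⟨ha, hb⟩ := hfiber_struct n n' (by rw [hn.2, hn'.2])
        have hn1 := (hmemP n).mp hn.1
        have hn'1 := (hmemP n').mp hn'.1
        set t : ℤ := φ n - φ n' with htdef
        have e1 : (n.1:ℝ) - n'.1 = (t:ℝ) * k₁ := by exact_mod_cast congrArg (Int.cast : ℤ → ℝ) ha
        have e2 : (n.2:ℝ) - n'.2 = (t:ℝ) * a₁ := by exact_mod_cast congrArg (Int.cast : ℤ → ℝ) hb
        have hkey : (t:ℝ)^2 * lsq ≤ 4 * R^2 := by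
          have f1 : ((n.1:ℝ)*e11 + (n.2:ℝ)*e21) - ((n'.1:ℝ)*e11 + (n'.2:ℝ)*e21)
              = (t:ℝ) * ((k₁:ℝ)*e11 + (a₁:ℝ)*e21) := by
            linear_combination e11 * e1 + e21 * e2
          have f2 : ((n.1:ℝ)*e12 + (n.2:ℝ)*e22) - ((n'.1:ℝ)*e12 + (n'.2:ℝ)*e22)
              = (t:ℝ) * ((k₁:ℝ)*e12 + (a₁:ℝ)*e22) := by
            linear_combination e12 * e1 + e22 * e2
          have hexp : (t:ℝ)^2 * lsq =
              (((n.1:ℝ)*e11 + (n.2:ℝ)*e21) - ((n'.1:ℝ)*e11 + (n'.2:ℝ)*e21))^2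
              + (((n.1:ℝ)*e12 + (n.2:ℝ)*e22) - ((n'.1:ℝ)*e12 + (n'.2:ℝ)*e22))^2 := by
            rw [f1, f2, hlsq]; ring
          rw [hexp]
          nlinarith [hn1, hn'1, sq_nonneg (((n.1:ℝ)*e11 + (n.2:ℝ)*e21) + ((n'.1:ℝ)*e11 + (n'.2:ℝ)*e21)),
            sq_nonneg (((n.1:ℝ)*e12 + (n.2:ℝ)*e22) + ((n'.1:ℝ)*e12 + (n'.2:ℝ)*e22))]
        have ht2 : (t:ℝ)^2 ≤ (2*R/lam)^2 := by
          rw [div_pow, le_div_iff₀ (by positivity)]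
          calc (t:ℝ)^2 * lam^2 = (t:ℝ)^2 * lsq := by rw [hlam_sq]
          _ ≤ 4*R^2 := hkey
          _ = (2*R)^2 := by ring
        have habs := abs_le_of_sq_le_sq ht2 (by positivity)
        have hφt : (φ n : ℝ) - (φ n') = (t:ℝ) := by rw [htdef]; push_cast; ring
        rw [hφt]
        exact habs
    have hPfin : P.Finite := by
      have hcover : P ⊆ ⋃ b ∈ (β '' P), (P ∩ β ⁻¹' {b}) := by
        intro n hn
        exact Set.mem_biUnion ⟨n, hn, rfl⟩ ⟨hn, rfl⟩
      exact Set.Finite.subset (Set.Finite.biUnion himgcount.1 (fun b _ => (hfibcount b).1)) hcover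
    refine ⟨hPfin, ?_⟩
    have hmain := count_fibers P hPfin β (2 * (2 * (lam * R / V)) + 3) (2 * (2*R/lam) + 3)
      himgcount.2 (fun b => (hfibcount b).2) (by positivity)
    calc (P.ncard : ℝ) ≤ (2 * (2 * (lam * R / V)) + 3) * (2 * (2*R/lam) + 3) := hmain
    _ ≤ 9 + 12*R/r + 28*R^2/V := by
      have e1 : (2 * (2 * (lam * R / V)) + 3) * (2 * (2*R/lam) + 3)
          = 16 * (R^2/V) + 12 * (lam*R/V) + 12 * (R/lam) + 9 := by
        field_simp
        ring
      rw [e1]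
      have h2 : lam*R/V ≤ R^2/V := by
        rw [div_le_div_iff₀ hV hV]
        have h9 : lam*R ≤ R^2 := by nlinarith [hlam_ub, hR]
        exact mul_le_mul_of_nonneg_right h9 hV.le
      have h3 : R/lam ≤ R/r := by
        rw [div_le_div_iff₀ hlam_pos hr]
        exact mul_le_mul_of_nonneg_left hlam_lb hR.le
      have e2 : 12*R/r = 12*(R/r) := by ring
      have e3 : 28*R^2/V = 28*(R^2/V) := by ring
      rw [e2, e3]
      linarith [h2, h3]
  · push_neg at hex
    have hsub : P ⊆ {((0:ℤ),(0:ℤ))} := fun n hn => hex n hn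
    have hfin : P.Finite := (Set.finite_singleton _).subset hsub
    refine ⟨hfin, ?_⟩
    have h5 : P.ncard ≤ 1 := by
      have h6 := Set.ncard_le_ncard hsub (Set.finite_singleton _)
      rwa [Set.ncard_singleton] at h6
    calc (P.ncard : ℝ) ≤ 1 := by exact_mod_cast h5
    _ ≤ _ := by
      have t1 : (0:ℝ) ≤ 12*R/r := by positivity
      have t2 : (0:ℝ) ≤ 28*R^2/V := by positivity
      linarith

lemma moebius_im (m : M2) (x y : ℝ) :
    (moebius m ((x:ℂ) + (y:ℂ) * Complex.I)).im =
      m.det * y / ((m 1 0 * x + m 1 1) ^ 2 + (m 1 0) ^ 2 * y ^ 2) := by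
  set a := m 0 0; set b := m 0 1; set c := m 1 0; set d := m 1 1
  have hdet : m.det = a * d - b * c := Matrix.det_fin_two m
  rw [moebius, hdet, Complex.div_im]
  have h1 : ((a:ℂ) * ((x:ℂ) + (y:ℂ)*Complex.I) + (b:ℂ)).re = a * x + b := by
    simp [Complex.add_re, Complex.mul_re]
  have h2 : ((a:ℂ) * ((x:ℂ) + (y:ℂ)*Complex.I) + (b:ℂ)).im = a * y := by
    simp [Complex.add_im, Complex.mul_im]
  have h3 : ((c:ℂ) * ((x:ℂ) + (y:ℂ)*Complex.I) + (d:ℂ)).re = c * x + d := by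
    simp [Complex.add_re, Complex.mul_re]
  have h4 : ((c:ℂ) * ((x:ℂ) + (y:ℂ)*Complex.I) + (d:ℂ)).im = c * y := by
    simp [Complex.add_im, Complex.mul_im]
  have h5 : Complex.normSq ((c:ℂ) * ((x:ℂ) + (y:ℂ)*Complex.I) + (d:ℂ)) =
      (c * x + d) ^ 2 + c ^ 2 * y ^ 2 := by
    rw [Complex.normSq_apply, h3, h4]; ring
  rw [h1, h2, h3, h4, h5]
  ring


lemma key (N l : ℕ) (x y : ℝ) (hy : 0 < y) (hsf : Squarefree N) (hN : 0 < N)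
    (hl : 0 < l) (hdvd : l ∣ N)
    (hmax : ∀ σ ∈ AtkinLehner N, (moebius σ ((x:ℂ) + (y:ℂ) * Complex.I)).im ≤ y) :
    ∀ k a : ℤ, ¬(k = 0 ∧ a = 0) →
      1 / (l:ℝ) ≤ ((N:ℝ)*k/l)^2 * y^2 + (((N:ℝ)*k/l)*x - a)^2 := by
  intro k a hka
  have hl1 : (1:ℝ) ≤ (l:ℝ) := by exact_mod_cast hl
  by_cases hk : k = 0
  · subst hk
    have ha : a ≠ 0 := fun h0 => hka ⟨rfl, h0⟩
    have h1 : (1:ℝ) ≤ (a:ℝ)^2 := by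
      have h2 : (1:ℤ) ≤ |a| := Int.one_le_abs ha
      have h3 : (1:ℝ) ≤ |(a:ℝ)| := by exact_mod_cast h2.trans_eq (by push_cast; rfl)
      nlinarith [abs_nonneg (a:ℝ), sq_abs (a:ℝ)]
    have h4 : 1/(l:ℝ) ≤ 1 := by
      rw [div_le_one (by linarith)]; exact hl1
    have hz : ((N:ℝ)*((0:ℤ):ℝ)/l) = 0 := by push_cast; ring
    rw [hz]
    nlinarith
  · -- main case k ≠ 0
    set h : ℕ := Int.gcd ((N:ℤ)*k) ((l:ℤ)*a) with hh
    have hNk : (N:ℤ)*k ≠ 0 := mul_ne_zero (by exact_mod_cast hN.ne') hk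
    have hpos : 0 < h := Int.gcd_pos_of_ne_zero_left _ hNk
    have hh0 : (h:ℤ) ≠ 0 := by exact_mod_cast hpos.ne'
    set C : ℤ := ((N:ℤ)*k) / h with hCdef
    set D : ℤ := -(((l:ℤ)*a) / h) with hDdef
    have hCh : C * h = (N:ℤ)*k := Int.ediv_mul_cancel (Int.gcd_dvd_left _ _)
    have hDh : D * h = -((l:ℤ)*a) := by
      rw [hDdef, neg_mul]
      exact congrArg Neg.neg (Int.ediv_mul_cancel (Int.gcd_dvd_right _ _))
    have hC0 : C ≠ 0 := by
      intro h0; rw [h0, zero_mul] at hCh; exact hNk hCh.symm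
    have hgcdCD : Int.gcd C D = 1 := by
      have hmain := Int.gcd_div_gcd_div_gcd (i := (N:ℤ)*k) (j := (l:ℤ)*a) hpos
      have : Int.gcd C D = Int.gcd (((N:ℤ)*k)/h) (((l:ℤ)*a)/h) := by
        rw [hCdef, hDdef, Int.gcd]
        simp [Int.natAbs_neg, Int.gcd]
      rw [this]; exact hmain
    set Q₁ : ℕ := Nat.gcd N C.natAbs with hQ₁def
    have hQ₁pos : 0 < Q₁ := Nat.gcd_pos_of_pos_left _ hN
    set Q : ℕ := N / Q₁ with hQdef
    have hQ₁N : Q₁ ∣ N := Nat.gcd_dvd_left _ _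
    have hQQ₁ : Q * Q₁ = N := Nat.div_mul_cancel hQ₁N
    have hQdvd : Q ∣ N := ⟨Q₁, hQQ₁.symm⟩
    have hQpos : 0 < Q := by
      rcases Nat.eq_zero_or_pos Q with h0 | h0
      · rw [h0, zero_mul] at hQQ₁; omega
      · exact h0
    have hcop : Nat.Coprime Q C.natAbs := by
      rw [Nat.Coprime]
      by_contra hcon
      obtain ⟨p, hp, hpd⟩ := Nat.exists_prime_and_dvd hcon
      have hpQ : p ∣ Q := hpd.trans (Nat.gcd_dvd_left _ _)
      have hpC : p ∣ C.natAbs := hpd.trans (Nat.gcd_dvd_right _ _)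
      have hpQ₁ : p ∣ Q₁ := Nat.dvd_gcd (hpQ.trans hQdvd) hpC
      have hpp : p * p ∣ N := by rw [← hQQ₁]; exact mul_dvd_mul hpQ hpQ₁
      exact hp.one_lt.ne' (Nat.isUnit_iff.mp (hsf p hpp))
    have hQC : IsCoprime (Q:ℤ) C := by
      rw [Int.isCoprime_iff_gcd_eq_one, Int.gcd]
      simpa using hcop
    have hQh : (Q:ℤ) ∣ (h:ℤ) := by
      have hd : (Q:ℤ) ∣ C * (h:ℤ) := by
        rw [hCh]
        exact Dvd.dvd.mul_right (by exact_mod_cast hQdvd) k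
      exact hQC.dvd_of_dvd_mul_left hd
    have hlh : (l:ℤ) ∣ (h:ℤ) := by
      apply Int.dvd_coe_gcd
      · exact Dvd.dvd.mul_right (by exact_mod_cast hdvd) k
      · exact Dvd.dvd.mul_right dvd_rfl a
    have hQleh : Q ≤ h := Nat.le_of_dvd hpos (by exact_mod_cast hQh)
    have hlleh : l ≤ h := Nat.le_of_dvd hpos (by exact_mod_cast hlh)
    have hlQh2 : (l:ℝ) * Q ≤ (h:ℝ)^2 := by
      have : l * Q ≤ h * h := Nat.mul_le_mul hlleh hQleh
      have := (Nat.cast_le (α := ℝ)).mpr this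
      push_cast at this ⊢; nlinarith
    have hQ₁C : (Q₁:ℤ) ∣ C := Int.natCast_dvd.mpr (Nat.gcd_dvd_right _ _)
    set c₀ : ℤ := C / Q₁ with hc₀def
    have hc₀ : c₀ * Q₁ = C := Int.ediv_mul_cancel hQ₁C
    have hNc₀ : (N:ℤ) * c₀ = (Q:ℤ) * C := by
      rw [← hQQ₁, ← hc₀]; push_cast; ring
    have hCD : IsCoprime C D := Int.isCoprime_iff_gcd_eq_one.mpr hgcdCD
    have hcop2 : IsCoprime ((Q:ℤ)*D) C := IsCoprime.mul_left hQC hCD.symm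
    obtain ⟨u, v, huv⟩ := hcop2
    -- σ := Q^{-1/2} (Q u, -v ; N c₀, Q D)
    set σ : M2 := (Real.sqrt Q)⁻¹ •
      !![(Q:ℝ)*(u:ℤ), ((-v : ℤ):ℝ); (N:ℝ)*(c₀:ℤ), (Q:ℝ)*(D:ℤ)] with hσdef
    have hQR : (0:ℝ) < Q := by exact_mod_cast hQpos
    have hsq : Real.sqrt Q > 0 := Real.sqrt_pos.mpr hQR
    have hsq2 : (Real.sqrt Q)^2 = Q := Real.sq_sqrt hQR.le
    have hdet : σ.det = 1 := by
      rw [hσdef, Matrix.det_smul, Matrix.det_fin_two_of]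
      have hcard : Fintype.card (Fin 2) = 2 := by simp
      rw [hcard]
      have hinv2 : ((Real.sqrt Q)⁻¹)^2 = (Q:ℝ)⁻¹ := by
        rw [inv_pow, hsq2]
      rw [hinv2]
      have hNc₀R : (N:ℝ) * (c₀:ℤ) = (Q:ℝ) * (C:ℝ) := by exact_mod_cast hNc₀
      rw [hNc₀R]
      have huvR : (u:ℝ) * ((Q:ℝ) * D) + (v:ℝ) * C = 1 := by exact_mod_cast huv
      push_cast
      field_simp
      linear_combination huvR
    have hσmem : σ ∈ AtkinLehner N := ⟨hdet, Q, u, -v, c₀, D, hQpos, hQdvd, rfl⟩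
    have him := hmax σ hσmem
    rw [moebius_im, hdet] at him
    have hσ10 : σ 1 0 = (Real.sqrt Q)⁻¹ * ((N:ℝ)*(c₀:ℤ)) := by
      rw [hσdef]
      simp [Matrix.smul_apply, smul_eq_mul]
    have hσ11 : σ 1 1 = (Real.sqrt Q)⁻¹ * ((Q:ℝ)*(D:ℤ)) := by
      rw [hσdef]
      simp [Matrix.smul_apply, smul_eq_mul]
    rw [hσ10, hσ11] at him
    have hNc₀R : (N:ℝ) * (c₀:ℤ) = (Q:ℝ) * (C:ℝ) := by exact_mod_cast hNc₀
    rw [hNc₀R] at him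
    set E : ℝ := ((C:ℝ)*x + (D:ℝ))^2 + (C:ℝ)^2 * y^2 with hEdef
    have hCR : (C:ℝ) ≠ 0 := by exact_mod_cast hC0
    have hE : 0 < E := by
      have h9 : (0:ℝ) < (C:ℝ)^2 * y^2 := by positivity
      nlinarith [sq_nonneg ((C:ℝ)*x + (D:ℝ))]
    have hinv2 : ((Real.sqrt Q)⁻¹)^2 = (Q:ℝ)⁻¹ := by rw [inv_pow, hsq2]
    have hden : ((Real.sqrt Q)⁻¹ * ((Q:ℝ)*C) * x + (Real.sqrt Q)⁻¹ * ((Q:ℝ)*D))^2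
        + ((Real.sqrt Q)⁻¹ * ((Q:ℝ)*C))^2 * y^2 = (Q:ℝ) * E := by
      have e1 : ((Real.sqrt Q)⁻¹ * ((Q:ℝ)*C) * x + (Real.sqrt Q)⁻¹ * ((Q:ℝ)*D))^2
          + ((Real.sqrt Q)⁻¹ * ((Q:ℝ)*C))^2 * y^2
          = ((Real.sqrt Q)⁻¹)^2 * (((Q:ℝ)*C*x + (Q:ℝ)*D)^2 + ((Q:ℝ)*C)^2 * y^2) := by
        ring
      have e2 : ((Q:ℝ)*C*x + (Q:ℝ)*D)^2 + ((Q:ℝ)*C)^2 * y^2 = (Q:ℝ)^2 * E := by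
        rw [hEdef]; ring
      rw [e1, e2, hinv2]
      field_simp
    rw [one_mul] at him
    have hQE : (0:ℝ) < (Q:ℝ) * E := by positivity
    have him2 : y / ((Q:ℝ)*E) ≤ y := by rw [← hden]; exact him
    have h1QE : 1 ≤ (Q:ℝ) * E := by
      have h7 := (div_le_iff₀ hQE).mp him2
      have h8 : y * 1 ≤ y * ((Q:ℝ)*E) := by linarith
      exact le_of_mul_le_mul_left h8 hy
    have hE1 : 1/(Q:ℝ) ≤ E := by
      rw [div_le_iff₀ hQR]; linarith [h1QE]
    -- translate goal
    have hChR : (h:ℝ)*(C:ℝ) = (N:ℝ)*(k:ℝ) := by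
      have h9 : ((C:ℝ)) * (h:ℝ) = (N:ℝ)*(k:ℝ) := by exact_mod_cast hCh
      linarith
    have hDhR : (h:ℝ)*(D:ℝ) = -((l:ℝ)*(a:ℝ)) := by
      have h9 : ((D:ℝ)) * (h:ℝ) = -((l:ℝ)*(a:ℝ)) := by exact_mod_cast hDh
      linarith
    have hlR : (l:ℝ) ≠ 0 := by positivity
    have hgoalEq : ((N:ℝ)*k/l)^2*y^2 + (((N:ℝ)*k/l)*x - a)^2 = (h:ℝ)^2/(l:ℝ)^2 * E := by
      have ha : (a:ℝ) = -((h:ℝ)*(D:ℝ))/l := by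
        rw [hDhR]; field_simp
      rw [← hChR, ha, hEdef]
      field_simp
      ring
    rw [hgoalEq]
    have hstep : 1/(l:ℝ) ≤ (h:ℝ)^2/(l:ℝ)^2 * (1/(Q:ℝ)) := by
      have hlRpos : (0:ℝ) < l := by exact_mod_cast hl
      rw [div_mul_div_comm, mul_one, div_le_div_iff₀ hlRpos (by positivity)]
      calc 1*((l:ℝ)^2*(Q:ℝ)) = (l:ℝ)*((l:ℝ)*(Q:ℝ)) := by ring
      _ ≤ (l:ℝ)*((h:ℝ)^2) := by
        apply mul_le_mul_of_nonneg_left hlQh2 (le_of_lt hlRpos)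
      _ = (h:ℝ)^2 * (l:ℝ) := by ring
    calc 1/(l:ℝ) ≤ (h:ℝ)^2/(l:ℝ)^2 * (1/(Q:ℝ)) := hstep
    _ ≤ (h:ℝ)^2/(l:ℝ)^2 * E := by
      apply mul_le_mul_of_nonneg_left hE1 (by positivity)

/-- First count of R(ℓ;g)⁰ ∩ Ψ(δ,L) for g upper-triangular corresponding to
    z = x + iy with maximal imaginary part under A₀(N). -/
theorem stmt5 : ∃ C : ℝ, 0 < C ∧
    ∀ (N ℓ : ℕ) (δ L x y : ℝ), Squarefree N → 0 < N → 0 < ℓ → ℓ ∣ N →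
    0 < δ → δ ≤ 1 → 0 < L → 0 < y →
    (∀ σ ∈ AtkinLehner N, (moebius σ (x + y * Complex.I)).im ≤ y) →
    ∀ g : M2, g = !![Real.sqrt y, x / Real.sqrt y; 0, (Real.sqrt y)⁻¹] →
    {γ : M2 | γ ∈ Rconj N ℓ g ∧ γ.trace = 0 ∧ γ ∈ PsiSet δ L}.Finite ∧
    (({γ : M2 | γ ∈ Rconj N ℓ g ∧ γ.trace = 0 ∧ γ ∈ PsiSet δ L}.ncard : ℝ) ≤
      C * (1 + Real.sqrt ℓ * L + (ℓ : ℝ) / ((N : ℝ) * y) * L ^ 2) *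
        (1 + (ℓ : ℝ) * y * Real.sqrt δ * L)) := by
  refine ⟨2000, by norm_num, ?_⟩
  intro N ℓ δ L x y hsf hN hℓ hdvd hδ hδ1 hL hy hmax g hg
  have hlR : (0:ℝ) < ℓ := by exact_mod_cast hℓ
  have hNR : (0:ℝ) < N := by exact_mod_cast hN
  have hyne : y ≠ 0 := ne_of_gt hy
  have hlne : (ℓ:ℝ) ≠ 0 := ne_of_gt hlR
  have hs : 0 < Real.sqrt y := Real.sqrt_pos.mpr hy
  have hs2 : (Real.sqrt y)^2 = y := Real.sq_sqrt hy.le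
  have hsne : Real.sqrt y ≠ 0 := ne_of_gt hs
  set s : ℝ := Real.sqrt y with hsdef
  set ginv : M2 := !![s⁻¹, -(x/s); 0, s] with hginvdef
  have hgingv : g * ginv = 1 := by
    rw [hg, hginvdef, Matrix.mul_fin_two, Matrix.one_fin_two]
    ext i j
    fin_cases i <;> fin_cases j <;> simp <;> field_simp <;> ring
  have hinvg : ginv * g = 1 := by
    rw [hg, hginvdef, Matrix.mul_fin_two, Matrix.one_fin_two]
    ext i j
    fin_cases i <;> fin_cases j <;> simp <;> field_simp <;> ring
  have hginv : g⁻¹ = ginv := Matrix.inv_eq_right_inv hgingv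
  set T : Set (ℤ×ℤ×ℤ) := {t | ((t.1:ℝ)*N/ℓ * x - t.2.1)^2 ≤ L^2 ∧
      ((t.1:ℝ)*N/ℓ * y)^2 ≤ 2*L^2 ∧
      ((t.1:ℝ)*N/ℓ * y - (2*t.2.1*x + t.2.2/ℓ - (t.1:ℝ)*N/ℓ * x^2)/y)^2 ≤ 4*δ*L^2} with hT
  set Φ : ℤ×ℤ×ℤ → M2 :=
    fun t => ginv * !![(t.2.1:ℝ), (t.2.2:ℝ)/ℓ; (t.1:ℝ)*N/ℓ, -(t.2.1:ℝ)] * g with hΦ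
  -- Step 1: S ⊆ Φ '' T
  have hSsub : {γ : M2 | γ ∈ Rconj N ℓ g ∧ γ.trace = 0 ∧ γ ∈ PsiSet δ L} ⊆ Φ '' T := by
    intro γ hγ
    obtain ⟨hmem, htr, hψ⟩ := hγ
    have hmem' : g * γ * ginv ∈ Rlat N ℓ := by rwa [Rconj, Set.mem_setOf_eq, hginv] at hmem
    obtain ⟨⟨n1, e1⟩, ⟨n2, e2⟩, ⟨n3, e3⟩, ⟨n4, e4⟩⟩ := hmem'
    have htrΓ : (g * γ * ginv).trace = 0 := by
      calc (g * γ * ginv).trace = (ginv * (g * γ)).trace := Matrix.trace_mul_comm _ _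
      _ = ((ginv * g) * γ).trace := by rw [Matrix.mul_assoc]
      _ = γ.trace := by rw [hinvg, one_mul]
      _ = 0 := htr
    have hn4 : (n4:ℝ) = -(n1:ℝ) := by
      have h8 : (g * γ * ginv).trace = (n1:ℝ) + n4 := by
        rw [Matrix.trace_fin_two, e1, e4]
      rw [htrΓ] at h8
      linarith [h8.symm]
    have e4' : (g * γ * ginv) 1 1 = -(n1:ℝ) := by rw [e4, hn4]
    have hΓlit : g * γ * ginv = !![(n1:ℝ), (n2:ℝ)/ℓ; (n3:ℝ)*N/ℓ, -(n1:ℝ)] := by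
      have h9 := Matrix.eta_fin_two (g * γ * ginv)
      rw [e1, e2, e3, e4'] at h9
      exact h9
    have h7 : ginv * (g * γ * ginv) * g = γ := by
      have hassoc : ginv * (g * γ * ginv) * g = (ginv * g) * γ * (ginv * g) := by
        simp only [mul_assoc]
      rw [hassoc, hinvg, one_mul, mul_one]
    have hγeq : γ = Φ (n3, n1, n2) := by
      rw [hΦ]
      simp only []
      rw [← hΓlit, h7]
    -- explicit entries of γ
    have hγlit : γ = !![(n1:ℝ) - (n3:ℝ)*N/ℓ*x, (2*(n1:ℝ)*x + (n2:ℝ)/ℓ - (n3:ℝ)*N/ℓ*x^2)/y;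
        (n3:ℝ)*N/ℓ*y, (n3:ℝ)*N/ℓ*x - (n1:ℝ)] := by
      rw [← h7, hΓlit, hg, hginvdef]
      rw [show y = s^2 from hs2.symm]
      rw [Matrix.mul_fin_two, Matrix.mul_fin_two]
      ext i j
      fin_cases i <;> fin_cases j <;> simp <;> field_simp <;> ring
    have hPf : Pfun γ = (((n1:ℝ) - (n3:ℝ)*N/ℓ*x)^2
        + ((2*(n1:ℝ)*x + (n2:ℝ)/ℓ - (n3:ℝ)*N/ℓ*x^2)/y)^2
        + ((n3:ℝ)*N/ℓ*y)^2 + ((n3:ℝ)*N/ℓ*x - (n1:ℝ))^2)/2 := by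
      rw [hγlit, Pfun]
      norm_num [Matrix.cons_val_zero, Matrix.cons_val_one, Matrix.head_cons]
    have hdetγ : γ.det = ((n1:ℝ) - (n3:ℝ)*N/ℓ*x) * ((n3:ℝ)*N/ℓ*x - (n1:ℝ))
        - ((2*(n1:ℝ)*x + (n2:ℝ)/ℓ - (n3:ℝ)*N/ℓ*x^2)/y) * ((n3:ℝ)*N/ℓ*y) := by
      rw [hγlit, Matrix.det_fin_two_of]
    obtain ⟨hψ1, hψ2⟩ := hψ
    rw [hPf] at hψ1
    rw [hPf, hdetγ] at hψ2
    refine ⟨(n3, n1, n2), ?_, hγeq.symm⟩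
    rw [hT, Set.mem_setOf_eq]
    refine ⟨?_, ?_, ?_⟩
    · simp only []
      nlinarith [hψ1, sq_nonneg ((2*(n1:ℝ)*x + (n2:ℝ)/ℓ - (n3:ℝ)*N/ℓ*x^2)/y),
        sq_nonneg ((n3:ℝ)*N/ℓ*y), sq_nonneg ((n1:ℝ) - (n3:ℝ)*N/ℓ*x),
        sq_nonneg ((n3:ℝ)*N/ℓ*x - (n1:ℝ) - ((n1:ℝ) - (n3:ℝ)*N/ℓ*x))]
    · simp only []
      nlinarith [hψ1, sq_nonneg ((2*(n1:ℝ)*x + (n2:ℝ)/ℓ - (n3:ℝ)*N/ℓ*x^2)/y),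
        sq_nonneg ((n1:ℝ) - (n3:ℝ)*N/ℓ*x), sq_nonneg ((n3:ℝ)*N/ℓ*x - (n1:ℝ))]
    · simp only []
      nlinarith [hψ2]
  -- Step 2: counting T
  set r : ℝ := (Real.sqrt ℓ)⁻¹ with hrdef
  have hsqrtl : 0 < Real.sqrt ℓ := Real.sqrt_pos.mpr hlR
  have hr : 0 < r := by rw [hrdef]; positivity
  have hr2 : r^2 = 1/(ℓ:ℝ) := by
    rw [hrdef, inv_pow, Real.sq_sqrt hlR.le, one_div]
  set e11 : ℝ := (N:ℝ)/ℓ * y with he11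
  set e21 : ℝ := (0:ℝ) with he21
  set e12 : ℝ := (N:ℝ)/ℓ * x with he12
  set e22 : ℝ := (-1:ℝ) with he22
  set V : ℝ := (N:ℝ)/ℓ * y with hVdef
  set R : ℝ := 2*L with hRdef
  have hRpos : 0 < R := by rw [hRdef]; linarith
  have hVpos : 0 < V := by rw [hVdef]; positivity
  have hVdet : |e11 * e22 - e12 * e21| = V := by
    rw [he11, he21, he12, he22, hVdef]
    rw [mul_zero, sub_zero, mul_neg_one, abs_neg]
    exact abs_of_pos (by positivity)
  have hmin : ∀ m : ℤ × ℤ, m ≠ (0,0) →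
      r^2 ≤ ((m.1:ℝ)*e11 + (m.2:ℝ)*e21)^2 + ((m.1:ℝ)*e12 + (m.2:ℝ)*e22)^2 := by
    intro m hm
    have hm' : ¬(m.1 = 0 ∧ m.2 = 0) := by
      rintro ⟨h1, h2⟩
      exact hm (Prod.ext h1 h2)
    have hk := key N ℓ x y hy hsf hN hℓ hdvd hmax m.1 m.2 hm'
    have heq : ((m.1:ℝ)*e11 + (m.2:ℝ)*e21)^2 + ((m.1:ℝ)*e12 + (m.2:ℝ)*e22)^2
        = ((N:ℝ)*m.1/ℓ)^2 * y^2 + (((N:ℝ)*m.1/ℓ)*x - m.2)^2 := by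
      rw [he11, he21, he12, he22]; ring
    rw [heq, hr2]
    exact hk
  obtain ⟨hPfin, hPcount⟩ := lattice_count e11 e12 e21 e22 r R V hr hRpos hVpos hVdet hmin
  set PZ : Set (ℤ × ℤ) := {m : ℤ × ℤ |
    ((m.1:ℝ)*e11 + (m.2:ℝ)*e21)^2 + ((m.1:ℝ)*e12 + (m.2:ℝ)*e22)^2 ≤ R^2} with hPZ
  set f : ℤ×ℤ×ℤ → ℤ×ℤ := fun t => (t.1, t.2.1) with hf
  have himg : f '' T ⊆ PZ := by
    rintro _ ⟨t, ht, rfl⟩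
    rw [hT, Set.mem_setOf_eq] at ht
    obtain ⟨c1, c2, _⟩ := ht
    rw [hPZ, Set.mem_setOf_eq, hf]
    simp only []
    have heq : ((t.1:ℝ)*e11 + (t.2.1:ℝ)*e21)^2 + ((t.1:ℝ)*e12 + (t.2.1:ℝ)*e22)^2
        = ((t.1:ℝ)*N/ℓ*y)^2 + ((t.1:ℝ)*N/ℓ*x - t.2.1)^2 := by
      rw [he11, he21, he12, he22]; ring
    rw [heq, hRdef]
    nlinarith [c1, c2]
  set Bf : ℝ := 4*ℓ*y*(Real.sqrt δ)*L with hBf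
  have hBfpos : 0 ≤ Bf := by rw [hBf]; positivity
  have hsqd : (2*(Real.sqrt δ)*L)^2 = 4*δ*L^2 := by
    rw [mul_pow, mul_pow, Real.sq_sqrt hδ.le]; ring
  have hfib : ∀ m : ℤ×ℤ, (T ∩ f ⁻¹' {m}).Finite ∧
      (((T ∩ f ⁻¹' {m}).ncard : ℝ) ≤ 2*Bf + 3) := by
    intro m
    apply count_via_int (T ∩ f ⁻¹' {m}) (fun t => t.2.2)
    · rintro ⟨k, a, b⟩ ht ⟨k', a', b'⟩ ht' hb
      have q : ((k, a) : ℤ×ℤ) = (k', a') := by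
        have q1 : f (k, a, b) = m := ht.2
        have q2 : f (k', a', b') = m := ht'.2
        rw [hf] at q1 q2
        exact q1.trans q2.symm
      have hk : k = k' := congrArg Prod.fst q
      have ha : a = a' := congrArg Prod.snd q
      have hbb : b = b' := hb
      rw [hk, ha, hbb]
    · exact hBfpos
    · rintro ⟨k, a, b⟩ ht ⟨k', a', b'⟩ ht'
      have q : ((k, a) : ℤ×ℤ) = (k', a') := by
        have q1 : f (k, a, b) = m := ht.2
        have q2 : f (k', a', b') = m := ht'.2
        rw [hf] at q1 q2
        exact q1.trans q2.symm
      have hk : k = k' := congrArg Prod.fst q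
      have ha : a = a' := congrArg Prod.snd q
      subst hk
      subst ha
      have c3 : ((k:ℝ)*N/ℓ * y - (2*(a:ℝ)*x + (b:ℝ)/ℓ - (k:ℝ)*N/ℓ * x^2)/y)^2 ≤ 4*δ*L^2 := by
        have h12 := ht.1
        rw [hT, Set.mem_setOf_eq] at h12
        exact h12.2.2
      have c3' : ((k:ℝ)*N/ℓ * y - (2*(a:ℝ)*x + (b':ℝ)/ℓ - (k:ℝ)*N/ℓ * x^2)/y)^2 ≤ 4*δ*L^2 := by
        have h12 := ht'.1
        rw [hT, Set.mem_setOf_eq] at h12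
        exact h12.2.2
      set X : ℝ := (k:ℝ)*N/ℓ * y - (2*(a:ℝ)*x + (b:ℝ)/ℓ - (k:ℝ)*N/ℓ * x^2)/y with hX
      set X' : ℝ := (k:ℝ)*N/ℓ * y - (2*(a:ℝ)*x + (b':ℝ)/ℓ - (k:ℝ)*N/ℓ * x^2)/y with hX'
      have hb1 : |X| ≤ 2*(Real.sqrt δ)*L :=
        abs_le_of_sq_le_sq (by rw [hsqd]; exact c3) (by positivity)
      have hb2 : |X'| ≤ 2*(Real.sqrt δ)*L :=
        abs_le_of_sq_le_sq (by rw [hsqd]; exact c3') (by positivity)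
      have hdiff : ((b:ℝ)) - (b':ℝ) = (ℓ:ℝ)*y*(X' - X) := by
        rw [hX, hX']
        field_simp
        ring_nf
        rw [mul_inv_cancel_right₀ (show y ≠ 0 by rw [← he21]; exact hyne), mul_inv_cancel_right₀ (show y ≠ 0 by rw [← he21]; exact hyne)]
      have habs : |((b:ℝ)) - (b':ℝ)| ≤ (ℓ:ℝ)*y*(|X'| + |X|) := by
        rw [hdiff, abs_mul, abs_of_pos (show (0:ℝ) < (ℓ:ℝ)*y by positivity)]
        apply mul_le_mul_of_nonneg_left (abs_sub _ _) (by positivity)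
      calc |((b:ℝ)) - (b':ℝ)| ≤ (ℓ:ℝ)*y*(|X'| + |X|) := habs
      _ ≤ (ℓ:ℝ)*y*(2*(Real.sqrt δ)*L + 2*(Real.sqrt δ)*L) := by
        apply mul_le_mul_of_nonneg_left (by linarith [hb1, hb2]) (by positivity)
      _ = Bf := by rw [hBf]; ring
  have hTfin : T.Finite := by
    have hcover : T ⊆ ⋃ m ∈ PZ, (T ∩ f ⁻¹' {m}) := by
      intro t ht
      exact Set.mem_biUnion (himg ⟨t, ht, rfl⟩) ⟨ht, rfl⟩
    exact Set.Finite.subset (Set.Finite.biUnion hPfin (fun m _ => (hfib m).1)) hcover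
  have hAcount : ((f '' T).ncard : ℝ) ≤ 9 + 12*R/r + 28*R^2/V := by
    have h11 : (f '' T).ncard ≤ PZ.ncard := Set.ncard_le_ncard himg hPfin
    calc ((f '' T).ncard : ℝ) ≤ (PZ.ncard : ℝ) := by exact_mod_cast h11
    _ ≤ _ := hPcount
  have hTcount := count_fibers T hTfin f (9 + 12*R/r + 28*R^2/V) (2*Bf + 3)
    hAcount (fun m => (hfib m).2) (by positivity)
  have hSfin : {γ : M2 | γ ∈ Rconj N ℓ g ∧ γ.trace = 0 ∧ γ ∈ PsiSet δ L}.Finite :=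
    (hTfin.image Φ).subset hSsub
  refine ⟨hSfin, ?_⟩
  have hc1 : (({γ : M2 | γ ∈ Rconj N ℓ g ∧ γ.trace = 0 ∧ γ ∈ PsiSet δ L}.ncard : ℕ) : ℝ)
      ≤ (T.ncard : ℝ) := by
    have s1 : {γ : M2 | γ ∈ Rconj N ℓ g ∧ γ.trace = 0 ∧ γ ∈ PsiSet δ L}.ncard
        ≤ (Φ '' T).ncard := Set.ncard_le_ncard hSsub (hTfin.image Φ)
    have s2 : (Φ '' T).ncard ≤ T.ncard := Set.ncard_image_le hTfin
    exact_mod_cast s1.trans s2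
  set Xf : ℝ := 1 + Real.sqrt ℓ * L + (ℓ:ℝ)/((N:ℝ)*y) * L^2 with hXf
  set Yf : ℝ := 1 + (ℓ:ℝ)*y*Real.sqrt δ*L with hYf
  have hXf0 : 0 ≤ Xf := by rw [hXf]; positivity
  have hYf0 : 0 ≤ Yf := by rw [hYf]; positivity
  have hform1 : 9 + 12*R/r + 28*R^2/V ≤ 112 * Xf := by
    rw [hRdef, hrdef, hVdef, hXf]
    have hsqrtlne : Real.sqrt ℓ ≠ 0 := ne_of_gt hsqrtl
    have t1 : 12*(2*L)/(Real.sqrt ℓ)⁻¹ = 24*L*Real.sqrt ℓ := by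
      rw [div_eq_mul_inv, inv_inv]; ring
    have t2 : 28*(2*L)^2/((N:ℝ)/ℓ * y) = 112 * ((ℓ:ℝ)/((N:ℝ)*y)) * L^2 := by
      field_simp
      ring
    rw [t1, t2]
    have q1 : (0:ℝ) ≤ Real.sqrt ℓ * L := by positivity
    have q2 : (0:ℝ) ≤ (ℓ:ℝ)/((N:ℝ)*y)*L^2 := by positivity
    have q3 : 24*L*Real.sqrt ℓ = 24*(Real.sqrt ℓ * L) := by ring
    have q4 : 112 * ((ℓ:ℝ)/((N:ℝ)*y)) * L^2 = 112*((ℓ:ℝ)/((N:ℝ)*y)*L^2) := by ring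
    rw [q3, q4]
    linarith [q1, q2]
  have hform2 : 2*Bf + 3 ≤ 11 * Yf := by
    rw [hBf, hYf]
    have q1 : (0:ℝ) ≤ (ℓ:ℝ)*y*Real.sqrt δ*L := by positivity
    linarith [q1]
  calc (({γ : M2 | γ ∈ Rconj N ℓ g ∧ γ.trace = 0 ∧ γ ∈ PsiSet δ L}.ncard : ℕ) : ℝ)
      ≤ (T.ncard : ℝ) := hc1
  _ ≤ (9 + 12*R/r + 28*R^2/V) * (2*Bf + 3) := hTcount
  _ ≤ (112 * Xf) * (11 * Yf) := by
    apply mul_le_mul hform1 hform2 (by positivity) (by positivity)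
  _ = 1232 * Xf * Yf := by ring
  _ ≤ 2000 * Xf * Yf := by nlinarith [mul_nonneg hXf0 hYf0]
end
end

section
/- For every ε > 0 there is a constant C = C(ε) > 0 with the following property. Let N be a squarefree positive integer, ℓ a positive divisor of N, δ ∈ (0,1], L > 0, and let z = x + iy ∈ ℍ satisfy Im(σ·z) ≤ y for all σ ∈ A₀(N); put g = (√y, x/√y; 0, 1/√y) ∈ SL₂(ℝ). Then the set of pairs (γ₁, γ₂) of upper-triangular matrices γ₁, γ₂ ∈ R(ℓ) (lower-left entry equal to 0) with g⁻¹·γᵢ·g ∈ Ω⋆(δ,L) for i = 1, 2 and det(γ₁) = det(γ₂) is finite with cardinality at most C·(N(1+L))^ε · ℓL² · (1 + ℓ·y²·δ + ℓ·y²·δ·L + ℓ·y²·δ^{3/2}·L²). -/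
open MeasureTheory Real Matrix Set

set_option maxHeartbeats 1000000
noncomputable section

-- ===================== auxiliary lemmas =====================

theorem tau_bound (ε : ℝ) (hε : 0 < ε) : ∃ C : ℝ, 1 ≤ C ∧
    ∀ n : ℕ, n ≠ 0 → (n.divisors.card : ℝ) ≤ C * (n : ℝ) ^ ε := by
  set B : ℝ := 1 + 2 / ε with hB
  have hB1 : 1 ≤ B := by rw [hB]; have : 0 < 2 / ε := by positivity
                         linarith
  have hB0 : 0 ≤ B := by linarith
  set P : ℕ := ⌈(2 : ℝ) ^ (1 / ε)⌉₊ with hP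
  refine ⟨B ^ (P + 1), one_le_pow₀ hB1, ?_⟩
  intro n hn
  have key : ∀ p ∈ n.primeFactors,
      ((n.factorization p + 1 : ℕ) : ℝ) ≤
        (if p ≤ P then B else 1) * ((p : ℝ) ^ (n.factorization p : ℕ)) ^ ε := by
    intro p hp
    have hpp : p.Prime := Nat.prime_of_mem_primeFactors hp
    have hp2 : (2 : ℝ) ≤ (p : ℝ) := by exact_mod_cast hpp.two_le
    set a : ℕ := n.factorization p with ha
    have hpa : ((p : ℝ) ^ a) ^ ε = (p : ℝ) ^ ((a : ℝ) * ε) := by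
      rw [Real.rpow_mul (by positivity), Real.rpow_natCast]
    rw [hpa]
    have h2a : (2:ℝ) ^ ((a:ℝ) * ε) ≤ (p : ℝ) ^ ((a:ℝ) * ε) :=
      Real.rpow_le_rpow (by norm_num) hp2 (by positivity)
    by_cases hcase : p ≤ P
    · simp only [hcase, if_true]
      have hexp : (a : ℝ) * ε * Real.log 2 + 1 ≤ (2:ℝ) ^ ((a:ℝ) * ε) := by
        rw [Real.rpow_def_of_pos (by norm_num)]
        have := Real.add_one_le_exp (Real.log 2 * ((a:ℝ) * ε))
        linarith [this]
      have hlog : (0.6931471803 : ℝ) < Real.log 2 := Real.log_two_gt_d9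
      have ha0 : (0 : ℝ) ≤ (a:ℝ) := by positivity
      have h1 : (1:ℝ) ≤ (2:ℝ) ^ ((a:ℝ) * ε) := Real.one_le_rpow (by norm_num) (by positivity)
      have hp1 : (1:ℝ) ≤ (p:ℝ) ^ ((a:ℝ) * ε) := le_trans h1 h2a
      have hq : (a : ℝ) * ε * Real.log 2 + 1 ≤ (p:ℝ) ^ ((a:ℝ) * ε) := le_trans hexp h2a
      have h6 : (2/ε) * ((a:ℝ) * ε * Real.log 2 + 1) ≤ (2/ε) * ((p:ℝ) ^ ((a:ℝ) * ε)) :=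
        mul_le_mul_of_nonneg_left hq (by positivity)
      have h5 : (2/ε) * ((a:ℝ) * ε * Real.log 2 + 1) = 2*(a:ℝ)*Real.log 2 + 2/ε := by
        field_simp
      have h7 : (a:ℝ) ≤ 2*(a:ℝ)*Real.log 2 := by nlinarith
      have h8 : B * ((p:ℝ) ^ ((a:ℝ) * ε)) =
          ((p:ℝ) ^ ((a:ℝ) * ε)) + (2/ε) * ((p:ℝ) ^ ((a:ℝ) * ε)) := by rw [hB]; ring
      have h9 : (0:ℝ) ≤ 2/ε := by positivity
      push_cast
      rw [h8]
      linarith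
    · simp only [hcase, if_false, one_mul]
      have hpP : ((2:ℝ) ^ (1/ε)) ≤ (p : ℝ) := by
        have h1 : ((2:ℝ) ^ (1/ε)) ≤ (P : ℝ) := Nat.le_ceil _
        have h2 : (P : ℝ) ≤ (p : ℝ) := by exact_mod_cast Nat.le_of_not_le hcase
        linarith
      have hmono : ((2:ℝ) ^ (1/ε)) ^ ((a:ℝ) * ε) ≤ (p:ℝ) ^ ((a:ℝ) * ε) :=
        Real.rpow_le_rpow (by positivity) hpP (by positivity)
      have heq : ((2:ℝ) ^ (1/ε)) ^ ((a:ℝ) * ε) = (2:ℝ) ^ (a : ℕ) := by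
        rw [← Real.rpow_natCast (2:ℝ) a, ← Real.rpow_mul (by norm_num)]
        congr 1
        field_simp
      have h2a1 : ((a:ℕ) : ℝ) + 1 ≤ (2:ℝ) ^ (a:ℕ) := by
        have := Nat.lt_two_pow_self (n := a)
        exact_mod_cast Nat.succ_le_of_lt this
      push_cast
      push_cast at h2a1
      linarith [heq ▸ hmono]
  have hcard : (n.divisors.card : ℝ) = ∏ p ∈ n.primeFactors, ((n.factorization p + 1 : ℕ) : ℝ) := by
    rw [Nat.card_divisors hn]
    push_cast
    ring
  have hprod : (n.divisors.card : ℝ) ≤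
      ∏ p ∈ n.primeFactors, (if p ≤ P then B else 1) * ((p : ℝ) ^ (n.factorization p : ℕ)) ^ ε := by
    rw [hcard]
    exact Finset.prod_le_prod (fun i _ => by positivity) key
  rw [Finset.prod_mul_distrib] at hprod
  have hn' : (∏ p ∈ n.primeFactors, ((p : ℝ) ^ (n.factorization p : ℕ)) ^ ε) = (n:ℝ) ^ ε := by
    rw [Real.finset_prod_rpow _ _ (fun i _ => by positivity)]
    congr 1
    norm_cast
    conv_rhs => rw [← Nat.factorization_prod_pow_eq_self hn]
    rw [Nat.prod_factorization_eq_prod_primeFactors]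
  rw [hn'] at hprod
  have hif : (∏ p ∈ n.primeFactors, (if p ≤ P then B else 1)) ≤ B ^ (P + 1) := by
    rw [Finset.prod_ite, Finset.prod_const, Finset.prod_const, one_pow, mul_one]
    have hsub : (n.primeFactors.filter (fun p => p ≤ P)).card ≤ P + 1 := by
      have hss : (n.primeFactors.filter (fun p => p ≤ P)) ⊆ Finset.range (P+1) := by
        intro p hp
        simp only [Finset.mem_filter] at hp
        exact Finset.mem_range.mpr (Nat.lt_succ_of_le hp.2)
      calc _ ≤ (Finset.range (P+1)).card := Finset.card_le_card hss
        _ = P + 1 := Finset.card_range _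
    exact pow_le_pow_right₀ hB1 hsub
  have hnpos : (0:ℝ) ≤ (n:ℝ) ^ ε := by positivity
  calc (n.divisors.card : ℝ) ≤ _ := hprod
    _ ≤ B ^ (P+1) * (n:ℝ) ^ ε := mul_le_mul_of_nonneg_right hif hnpos

theorem card_Icc_le_real (a b : ℤ) (c : ℝ) (h : (b:ℝ) - (a:ℝ) + 1 ≤ c) (hc : 0 ≤ c) :
    ((Finset.Icc a b).card : ℝ) ≤ c := by
  rcases le_or_gt a b with h1 | h1
  · rw [Int.card_Icc]
    have h2 : ((b+1-a).toNat : ℤ) = b+1-a := Int.toNat_of_nonneg (by omega)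
    have h3 : (((b+1-a).toNat : ℤ) : ℝ) ≤ c := by rw [h2]; push_cast; linarith
    exact_mod_cast h3
  · rw [Int.card_Icc]
    have h2 : (b+1-a).toNat = 0 := by omega
    rw [h2]
    simpa using hc

theorem int_abs_le_of_sq_le (u : ℤ) (c : ℝ) (h : (u:ℝ)^2 ≤ c^2) (hc : 0 ≤ c) :
    -c ≤ (u:ℝ) ∧ (u:ℝ) ≤ c := by
  constructor
  · nlinarith [sq_nonneg ((u:ℝ) + c)]
  · nlinarith [sq_nonneg ((u:ℝ) - c)]

theorem sqrt_two_le_3half : Real.sqrt 2 ≤ 3/2 := by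
  nlinarith [Real.mul_self_sqrt (show (0:ℝ) ≤ 2 by norm_num), Real.sqrt_nonneg 2]

theorem one_le_mul_real {a b : ℝ} (ha : 1 ≤ a) (hb : 1 ≤ b) : 1 ≤ a*b := by nlinarith

theorem one_le_of_sq {x : ℝ} (hx : 0 ≤ x) (h : 1 ≤ x*x) : 1 ≤ x := by nlinarith

theorem sq_bound1 (a : ℝ) : (2*(2*a)+1)*(2*(2*a)+1) ≤ 32*(a*a)+2 := by
  nlinarith [sq_nonneg (4*a-1)]

theorem sq_bound2 (t : ℝ) : (2*t+1)*(2*t+1) ≤ 8*t^2+2 := by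
  nlinarith [sq_nonneg (2*t-1)]

theorem Pfun_tri (a b d : ℝ) : Pfun !![a, b; 0, d] = (a^2+b^2+d^2)/2 := by
  simp [Pfun]

theorem det_tri (a b d : ℝ) : (!![a, b; 0, d] : M2).det = a*d := by
  rw [Matrix.det_fin_two]
  simp

theorem keyA (N ℓ : ℕ) (δ L x y : ℝ) (hℓ : 0 < ℓ) (hδ : 0 < δ) (hL : 0 < L) (hy : 0 < y)
    (g : M2) (hg : g = !![Real.sqrt y, x / Real.sqrt y; 0, (Real.sqrt y)⁻¹]) (γ : M2)
    (hγ : γ ∈ Rlat N ℓ) (hc : γ 1 0 = 0) (hΩ : g⁻¹ * γ * g ∈ OmegaStar δ L) :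
    γ 0 0 = ((⌊γ 0 0⌋ : ℤ) : ℝ) ∧ γ 1 1 = ((⌊γ 1 1⌋ : ℤ) : ℝ) ∧
    (ℓ:ℝ) * γ 0 1 = ((⌊(ℓ:ℝ) * γ 0 1⌋ : ℤ) : ℝ) ∧
    (γ 0 0)^2 ≤ 2*L^2 ∧ (γ 1 1)^2 ≤ 2*L^2 ∧ (γ 0 0 - γ 1 1)^2 ≤ 4*δ*L^2 ∧
    |(ℓ:ℝ) * γ 0 1 + (ℓ:ℝ)*(γ 0 0 - γ 1 1)*x| ≤ 2*(ℓ:ℝ)*Real.sqrt δ*L*y ∧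
    γ.det = γ 0 0 * γ 1 1 ∧ ¬(γ 0 0 = 0 ∧ γ 1 1 = 0 ∧ γ 0 1 = 0) := by
  have hs : Real.sqrt y > 0 := Real.sqrt_pos.mpr hy
  have hss : Real.sqrt y * Real.sqrt y = y := Real.mul_self_sqrt hy.le
  have hlR : (0:ℝ) < (ℓ:ℝ) := by exact_mod_cast hℓ
  have hginv : g⁻¹ = !![(Real.sqrt y)⁻¹, -(x / Real.sqrt y); 0, Real.sqrt y] := by
    apply Matrix.inv_eq_right_inv
    subst hg
    ext i j
    fin_cases i <;> fin_cases j <;>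
      simp [Matrix.mul_apply, Fin.sum_univ_two, Matrix.one_apply] <;> field_simp <;> ring
  have hm : g⁻¹ * γ * g = !![γ 0 0, ((γ 0 0 - γ 1 1) * x + γ 0 1) / y; 0, γ 1 1] := by
    rw [hginv, hg]
    ext i j
    fin_cases i <;> fin_cases j <;>
      simp [Matrix.mul_apply, Matrix.vecMul, dotProduct, Fin.sum_univ_two, hc] <;>
      field_simp <;> ring_nf <;> simp [Real.sq_sqrt hy.le]
  obtain ⟨⟨hP, hPd⟩, hne⟩ := hΩ
  rw [hm] at hP hPd hne
  rw [Pfun_tri] at hP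
  rw [Pfun_tri, det_tri] at hPd
  set B : ℝ := ((γ 0 0 - γ 1 1) * x + γ 0 1) / y with hB
  obtain ⟨⟨n1, e1⟩, ⟨n2, e2⟩, _, ⟨n4, e4⟩⟩ := hγ
  have i1 : γ 0 0 = ((⌊γ 0 0⌋ : ℤ) : ℝ) := by rw [e1, Int.floor_intCast]
  have i4 : γ 1 1 = ((⌊γ 1 1⌋ : ℤ) : ℝ) := by rw [e4, Int.floor_intCast]
  have e2' : (ℓ:ℝ) * γ 0 1 = (n2 : ℝ) := by rw [e2]; field_simp
  have i2 : (ℓ:ℝ) * γ 0 1 = ((⌊(ℓ:ℝ) * γ 0 1⌋ : ℤ) : ℝ) := by rw [e2', Int.floor_intCast]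
  have q1 : (γ 0 0)^2 ≤ 2*L^2 := by nlinarith [sq_nonneg B, sq_nonneg (γ 1 1)]
  have q4 : (γ 1 1)^2 ≤ 2*L^2 := by nlinarith [sq_nonneg B, sq_nonneg (γ 0 0)]
  have q2 : (γ 0 0 - γ 1 1)^2 + B^2 ≤ 4*δ*L^2 := by nlinarith []
  have qk : (γ 0 0 - γ 1 1)^2 ≤ 4*δ*L^2 := by nlinarith [sq_nonneg B]
  have hsd : Real.sqrt δ * Real.sqrt δ = δ := Real.mul_self_sqrt hδ.le
  have hsd0 : 0 ≤ Real.sqrt δ := Real.sqrt_nonneg δ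
  have hc2 : (2*Real.sqrt δ*L)^2 = 4*δ*L^2 := by
    have h : (2*Real.sqrt δ*L)^2 = 4*(Real.sqrt δ*Real.sqrt δ)*L^2 := by ring
    rw [h, hsd]
  have hB2 : B^2 ≤ 4*δ*L^2 := by nlinarith [sq_nonneg (γ 0 0 - γ 1 1)]
  have qB : |B| ≤ 2*Real.sqrt δ*L := by
    rw [abs_le]
    have hcnn : 0 ≤ 2*Real.sqrt δ*L := by positivity
    constructor
    · nlinarith [sq_nonneg (B + 2*Real.sqrt δ*L), hB2, hc2, hcnn]
    · nlinarith [sq_nonneg (B - 2*Real.sqrt δ*L), hB2, hc2, hcnn]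
  have qj : |(ℓ:ℝ) * γ 0 1 + (ℓ:ℝ)*(γ 0 0 - γ 1 1)*x| ≤ 2*(ℓ:ℝ)*Real.sqrt δ*L*y := by
    have hrw : (ℓ:ℝ) * γ 0 1 + (ℓ:ℝ)*(γ 0 0 - γ 1 1)*x = (ℓ:ℝ) * (B * y) := by
      rw [hB]; field_simp; ring
    rw [hrw, abs_mul, abs_mul, abs_of_nonneg hlR.le, abs_of_nonneg hy.le]
    calc (ℓ:ℝ) * (|B| * y) ≤ (ℓ:ℝ) * ((2*Real.sqrt δ*L) * y) := by
          apply mul_le_mul_of_nonneg_left _ hlR.le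
          exact mul_le_mul_of_nonneg_right qB hy.le
      _ = 2*(ℓ:ℝ)*Real.sqrt δ*L*y := by ring
  have qdet : γ.det = γ 0 0 * γ 1 1 := by
    rw [Matrix.det_fin_two, hc]
    ring
  have qnz : ¬(γ 0 0 = 0 ∧ γ 1 1 = 0 ∧ γ 0 1 = 0) := by
    rintro ⟨z1, z2, z3⟩
    apply hne
    rw [hB, z1, z2, z3]
    ext i j
    fin_cases i <;> fin_cases j <;> simp
  exact ⟨i1, i4, i2, q1, q4, qk, qj, qdet, qnz⟩

set_option maxHeartbeats 1600000 in
/-- Second-moment count of pairs of upper-triangular matrices of R(ℓ) whose conjugates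
    by g lie in Ω⋆(δ,L). -/
theorem stmt7 (ε : ℝ) (hε : 0 < ε) : ∃ C : ℝ, 0 < C ∧
    ∀ (N ℓ : ℕ) (δ L x y : ℝ), Squarefree N → 0 < N → 0 < ℓ → ℓ ∣ N →
    0 < δ → δ ≤ 1 → 0 < L → 0 < y →
    (∀ σ ∈ AtkinLehner N, (moebius σ (x + y * Complex.I)).im ≤ y) →
    ∀ g : M2, g = !![Real.sqrt y, x / Real.sqrt y; 0, (Real.sqrt y)⁻¹] →
    {p : M2 × M2 | p.1 ∈ Rlat N ℓ ∧ p.2 ∈ Rlat N ℓ ∧ p.1 1 0 = 0 ∧ p.2 1 0 = 0 ∧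
        g⁻¹ * p.1 * g ∈ OmegaStar δ L ∧ g⁻¹ * p.2 * g ∈ OmegaStar δ L ∧
        p.1.det = p.2.det}.Finite ∧
    (({p : M2 × M2 | p.1 ∈ Rlat N ℓ ∧ p.2 ∈ Rlat N ℓ ∧ p.1 1 0 = 0 ∧ p.2 1 0 = 0 ∧
        g⁻¹ * p.1 * g ∈ OmegaStar δ L ∧ g⁻¹ * p.2 * g ∈ OmegaStar δ L ∧
        p.1.det = p.2.det}.ncard : ℝ) ≤
      C * ((N : ℝ) * (1 + L)) ^ ε * ((ℓ : ℝ) * L ^ 2) *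
        (1 + (ℓ : ℝ) * y ^ 2 * δ + (ℓ : ℝ) * y ^ 2 * δ * L
          + (ℓ : ℝ) * y ^ 2 * δ ^ ((3 : ℝ) / 2) * L ^ 2)) := by
  classical
  obtain ⟨Cτ, hCτ1, hCτ⟩ := tau_bound (ε/2) (by positivity)
  have hCτ0 : (0:ℝ) ≤ Cτ := le_trans zero_le_one hCτ1
  have h5e : (0:ℝ) < (5:ℝ) ^ (ε/2) := Real.rpow_pos_of_pos (by norm_num) _
  refine ⟨4096 + 1800 * Cτ * (5:ℝ) ^ (ε/2), by linarith [mul_nonneg hCτ0 h5e.le], ?_⟩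
  intro N ℓ δ L x y _hsf hN hℓ _hdvd hδ hδ1 hL hy _hht g hg
  set C : ℝ := 4096 + 1800 * Cτ * (5:ℝ) ^ (ε/2) with hC
  have hC16 : (16:ℝ) ≤ C := by rw [hC]; linarith [mul_nonneg hCτ0 h5e.le]
  set S : Set (M2 × M2) := {p : M2 × M2 | p.1 ∈ Rlat N ℓ ∧ p.2 ∈ Rlat N ℓ ∧
      p.1 1 0 = 0 ∧ p.2 1 0 = 0 ∧
      g⁻¹ * p.1 * g ∈ OmegaStar δ L ∧ g⁻¹ * p.2 * g ∈ OmegaStar δ L ∧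
      p.1.det = p.2.det} with hS
  have hlR : (0:ℝ) < (ℓ:ℝ) := by exact_mod_cast hℓ
  have hl1 : (1:ℝ) ≤ (ℓ:ℝ) := by exact_mod_cast hℓ
  have hN1 : (1:ℝ) ≤ (N:ℝ) := by exact_mod_cast hN
  have hsd : Real.sqrt δ * Real.sqrt δ = δ := Real.mul_self_sqrt hδ.le
  have hsd0 : (0:ℝ) ≤ Real.sqrt δ := Real.sqrt_nonneg δ
  have hsd1 : Real.sqrt δ ≤ 1 := by
    rw [show (1:ℝ) = Real.sqrt 1 by simp]
    exact Real.sqrt_le_sqrt hδ1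
  have hs2 : Real.sqrt 2 * Real.sqrt 2 = 2 := Real.mul_self_sqrt (by norm_num)
  have hs20 : (0:ℝ) ≤ Real.sqrt 2 := Real.sqrt_nonneg 2
  have hs2le : Real.sqrt 2 ≤ 3/2 := sqrt_two_le_3half
  set T : ℝ := 2*(ℓ:ℝ)*Real.sqrt δ*L*y with hT
  have hT0 : (0:ℝ) ≤ T := by rw [hT]; positivity
  set G : ℝ := ((N:ℝ)*(1+L)) ^ ε with hG
  have hG1 : (1:ℝ) ≤ G := Real.one_le_rpow (one_le_mul_real hN1 (by linarith)) hε.le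
  have hG0 : (0:ℝ) ≤ G := by linarith
  have hd32 : Real.sqrt δ * δ = δ ^ ((3:ℝ)/2) := by
    rw [Real.sqrt_eq_rpow]
    nth_rewrite 2 [show δ = δ ^ (1:ℝ) by rw [Real.rpow_one]]
    rw [← Real.rpow_add hδ]
    norm_num
  have hd32pos : (0:ℝ) < δ ^ ((3:ℝ)/2) := Real.rpow_pos_of_pos hδ _
  have hdsq : δ^2 ≤ δ ^ ((3:ℝ)/2) := by
    have h := Real.rpow_le_rpow_of_exponent_ge hδ hδ1 (show (3:ℝ)/2 ≤ ((2:ℕ):ℝ) by norm_num)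
    rwa [Real.rpow_natCast] at h
  set Vp : ℝ := 1 + (ℓ:ℝ)*y^2*δ + (ℓ:ℝ)*y^2*δ*L + (ℓ:ℝ)*y^2*δ^((3:ℝ)/2)*L^2 with hVp
  have hVp0 : (0:ℝ) ≤ Vp := by rw [hVp]; positivity
  have hVterm1 : (0:ℝ) ≤ (ℓ:ℝ)*y^2*δ := by positivity
  have hVterm2 : (0:ℝ) ≤ (ℓ:ℝ)*y^2*δ*L := by positivity
  have hVterm3 : (0:ℝ) ≤ (ℓ:ℝ)*y^2*δ^((3:ℝ)/2)*L^2 := by positivity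
  have hTsq : T^2 = 4*(ℓ:ℝ)^2*y^2*δ*L^2 := by
    rw [hT]
    linear_combination (4*(ℓ:ℝ)^2*y^2*L^2)*hsd
  have hkey := fun (γ : M2) (h1 : γ ∈ Rlat N ℓ) (h2 : γ 1 0 = 0)
    (h3 : g⁻¹ * γ * g ∈ OmegaStar δ L) => keyA N ℓ δ L x y hℓ hδ hL hy g hg γ h1 h2 h3
  rcases le_or_gt 1 (2*L^2) with hbig | hsmall
  · -- ============ MAIN CASE ============
    have hxx2 : (Real.sqrt 2*L)*(Real.sqrt 2*L) = 2*L^2 := by linear_combination (L^2)*hs2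
    have hs2L1 : (1:ℝ) ≤ Real.sqrt 2 * L :=
      one_le_of_sq (by positivity) (by rw [hxx2]; exact hbig)
    set A : ℤ := ⌊Real.sqrt 2 * L⌋ with hA
    set K : ℤ := ⌊2*Real.sqrt δ*L⌋ with hK
    set Ia : Finset ℤ := Finset.Icc (-A) A with hIa
    set Ik : Finset ℤ := Finset.Icc (-K) K with hIk
    set Ij : ℤ → Finset ℤ :=
      fun k => Finset.Icc ⌈-((ℓ:ℝ)*(k:ℝ)*x) - T⌉ ⌊-((ℓ:ℝ)*(k:ℝ)*x) + T⌋ with hIj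
    set Jc : ℕ := (⌊2*T⌋+1).toNat with hJc
    set F : ℤ×ℤ×ℤ → ℤ := fun u => u.1*(u.1 - u.2.1) with hF
    set Dfin : Finset (ℤ×ℤ×ℤ) :=
      (Ia ×ˢ Ik).biUnion (fun q => {q.1} ×ˢ ({q.2} ×ˢ Ij q.2)) with hDfin
    set φ : M2 → ℤ×ℤ×ℤ :=
      fun γ => (⌊γ 0 0⌋, ⌊γ 0 0⌋ - ⌊γ 1 1⌋, ⌊(ℓ:ℝ)*γ 0 1⌋) with hφ
    set Φ : M2×M2 → (ℤ×ℤ×ℤ)×(ℤ×ℤ×ℤ) := fun p => (φ p.1, φ p.2) with hΦ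
    set Pfin : Finset ((ℤ×ℤ×ℤ)×(ℤ×ℤ×ℤ)) :=
      (Dfin ×ˢ Dfin).filter (fun w => F w.1 = F w.2) with hPfin
    have hmemD : ∀ u : ℤ×ℤ×ℤ, u ∈ Dfin ↔ u.1 ∈ Ia ∧ u.2.1 ∈ Ik ∧ u.2.2 ∈ Ij u.2.1 := by
      intro u
      rw [hDfin]
      constructor
      · intro hu
        obtain ⟨q, hq, hu2⟩ := Finset.mem_biUnion.mp hu
        rw [Finset.mem_product] at hq
        simp only [Finset.mem_product, Finset.mem_singleton] at hu2
        obtain ⟨ea, ek, ej⟩ := hu2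
        rw [ea, ek]
        exact ⟨hq.1, hq.2, ej⟩
      · rintro ⟨h1, h2, h3⟩
        refine Finset.mem_biUnion.mpr ⟨(u.1, u.2.1), Finset.mem_product.mpr ⟨h1, h2⟩, ?_⟩
        exact Finset.mem_product.mpr ⟨Finset.mem_singleton_self _,
          Finset.mem_product.mpr ⟨Finset.mem_singleton_self _, h3⟩⟩
    have hIjcard : ∀ k : ℤ, (Ij k).card ≤ Jc := by
      intro k
      rw [hIj, hJc, Int.card_Icc]
      apply Int.toNat_le_toNat
      have h1 : ((⌊-((ℓ:ℝ)*(k:ℝ)*x) + T⌋ : ℤ) : ℝ) ≤ -((ℓ:ℝ)*(k:ℝ)*x) + T := Int.floor_le _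
      have h2 : -((ℓ:ℝ)*(k:ℝ)*x) - T ≤ ((⌈-((ℓ:ℝ)*(k:ℝ)*x) - T⌉ : ℤ) : ℝ) := Int.le_ceil _
      have h3 : (⌊-((ℓ:ℝ)*(k:ℝ)*x) + T⌋ - ⌈-((ℓ:ℝ)*(k:ℝ)*x) - T⌉ : ℤ) ≤ ⌊2*T⌋ := by
        apply Int.le_floor.mpr
        push_cast
        linarith
      omega
    have hJcR : (Jc:ℝ) ≤ 2*T+1 := by
      rw [hJc]
      have h0 : (0:ℤ) ≤ ⌊2*T⌋+1 := by
        have h00 : (0:ℤ) ≤ ⌊2*T⌋ := Int.le_floor.mpr (by push_cast; linarith)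
        omega
      have h1 : (((⌊2*T⌋+1).toNat : ℤ) : ℝ) ≤ 2*T+1 := by
        rw [Int.toNat_of_nonneg h0]
        push_cast
        have := Int.floor_le (2*T)
        linarith
      exact_mod_cast h1
    have hJc0 : (0:ℝ) ≤ (Jc:ℝ) := by positivity
    have hIaR : (Ia.card : ℝ) ≤ 2*(Real.sqrt 2*L)+1 := by
      rw [hIa]
      apply card_Icc_le_real
      · have := Int.floor_le (Real.sqrt 2 * L)
        rw [hA]
        push_cast
        linarith
      · positivity
    have hIkR : (Ik.card : ℝ) ≤ 2*(2*Real.sqrt δ*L)+1 := by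
      rw [hIk]
      apply card_Icc_le_real
      · have := Int.floor_le (2*Real.sqrt δ*L)
        rw [hK]
        push_cast
        linarith
      · positivity
    have hIk0 : (0:ℝ) ≤ (Ik.card : ℝ) := by positivity
    have hDnat : Dfin.card ≤ (Ia ×ˢ Ik).card * Jc := by
      rw [hDfin]
      calc ((Ia ×ˢ Ik).biUnion (fun q => {q.1} ×ˢ ({q.2} ×ˢ Ij q.2))).card
          ≤ ∑ q ∈ Ia ×ˢ Ik, ({q.1} ×ˢ ({q.2} ×ˢ Ij q.2)).card := Finset.card_biUnion_le
        _ ≤ ∑ _q ∈ Ia ×ˢ Ik, Jc := by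
            apply Finset.sum_le_sum
            intro q _
            rw [Finset.card_product, Finset.card_product, Finset.card_singleton,
              Finset.card_singleton, one_mul, one_mul]
            exact hIjcard q.2
        _ = (Ia ×ˢ Ik).card * Jc := by rw [Finset.sum_const, smul_eq_mul]
    have hDR : (Dfin.card : ℝ) ≤ (2*(Real.sqrt 2*L)+1) * (2*(2*Real.sqrt δ*L)+1) * (2*T+1) := by
      have h1 : (Dfin.card : ℝ) ≤ (Ia.card : ℝ) * (Ik.card : ℝ) * (Jc : ℝ) := by
        have h2 := hDnat
        rw [Finset.card_product] at h2
        exact_mod_cast h2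
      have h3 : (Ia.card : ℝ) * (Ik.card : ℝ) ≤ (2*(Real.sqrt 2*L)+1) * (2*(2*Real.sqrt δ*L)+1) :=
        mul_le_mul hIaR hIkR hIk0 (by positivity)
      calc (Dfin.card : ℝ) ≤ (Ia.card : ℝ) * (Ik.card : ℝ) * (Jc : ℝ) := h1
        _ ≤ ((2*(Real.sqrt 2*L)+1) * (2*(2*Real.sqrt δ*L)+1)) * (2*T+1) :=
            mul_le_mul h3 hJcR hJc0 (by positivity)
        _ = (2*(Real.sqrt 2*L)+1) * (2*(2*Real.sqrt δ*L)+1) * (2*T+1) := by ring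
    set D0 : Finset (ℤ×ℤ×ℤ) := Dfin.filter (fun u => F u = 0) with hD0
    have hD0R : (D0.card : ℝ) ≤ 2*((2*(2*Real.sqrt δ*L)+1) * (2*T+1)) := by
      set X : Finset (ℤ×ℤ×ℤ) := Ik.biUnion (fun k => ({(0:ℤ)} ×ˢ ({k} ×ˢ Ij k))) with hX
      set Y : Finset (ℤ×ℤ×ℤ) := Ik.biUnion (fun k => ({k} ×ˢ ({k} ×ˢ Ij k))) with hY
      have hsub : D0 ⊆ X ∪ Y := by
        intro u hu
        rw [hD0, Finset.mem_filter] at hu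
        obtain ⟨huD, huF⟩ := hu
        obtain ⟨h1, h2, h3⟩ := (hmemD u).mp huD
        have huF2 : u.1*(u.1 - u.2.1) = 0 := huF
        rcases mul_eq_zero.mp huF2 with hz | hz
        · apply Finset.mem_union_left
          rw [hX]
          refine Finset.mem_biUnion.mpr ⟨u.2.1, h2, ?_⟩
          exact Finset.mem_product.mpr ⟨Finset.mem_singleton.mpr hz,
            Finset.mem_product.mpr ⟨Finset.mem_singleton_self _, h3⟩⟩
        · apply Finset.mem_union_right
          rw [hY]
          have he : u.1 = u.2.1 := by omega
          refine Finset.mem_biUnion.mpr ⟨u.2.1, h2, ?_⟩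
          exact Finset.mem_product.mpr ⟨Finset.mem_singleton.mpr he,
            Finset.mem_product.mpr ⟨Finset.mem_singleton_self _, h3⟩⟩
      have hXc : X.card ≤ Ik.card * Jc := by
        rw [hX]
        calc (Ik.biUnion (fun k => ({(0:ℤ)} ×ˢ ({k} ×ˢ Ij k)))).card
            ≤ ∑ k ∈ Ik, ({(0:ℤ)} ×ˢ ({k} ×ˢ Ij k)).card := Finset.card_biUnion_le
          _ ≤ ∑ _k ∈ Ik, Jc := by
              apply Finset.sum_le_sum
              intro k _
              simp only [Finset.card_product, Finset.card_singleton, one_mul]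
              exact hIjcard k
          _ = Ik.card * Jc := by rw [Finset.sum_const, smul_eq_mul]
      have hYc : Y.card ≤ Ik.card * Jc := by
        rw [hY]
        calc (Ik.biUnion (fun k => ({k} ×ˢ ({k} ×ˢ Ij k)))).card
            ≤ ∑ k ∈ Ik, ({k} ×ˢ ({k} ×ˢ Ij k)).card := Finset.card_biUnion_le
          _ ≤ ∑ _k ∈ Ik, Jc := by
              apply Finset.sum_le_sum
              intro k _
              simp only [Finset.card_product, Finset.card_singleton, one_mul]
              exact hIjcard k
          _ = Ik.card * Jc := by rw [Finset.sum_const, smul_eq_mul]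
      have h1 : D0.card ≤ Ik.card * Jc + Ik.card * Jc :=
        le_trans (Finset.card_le_card hsub)
          (le_trans (Finset.card_union_le _ _) (Nat.add_le_add hXc hYc))
      have h2 : (D0.card : ℝ) ≤ (Ik.card : ℝ) * (Jc : ℝ) + (Ik.card : ℝ) * (Jc : ℝ) := by
        exact_mod_cast h1
      have h3 : (Ik.card : ℝ) * (Jc : ℝ) ≤ (2*(2*Real.sqrt δ*L)+1) * (2*T+1) :=
        mul_le_mul hIkR hJcR hJc0 (by positivity)
      linarith
    have hfibR : ∀ u ∈ Dfin, F u ≠ 0 →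
        ((Dfin.filter (fun v => F v = F u)).card : ℝ) ≤
          2 * (Cτ * ((5:ℝ)^(ε/2) * G)) * (2*T+1) := by
      intro u huD huF
      set n : ℤ := F u with hn
      set divF : Finset ℤ :=
        ((n.natAbs.divisors.image (fun m : ℕ => (m:ℤ))) ∪
         (n.natAbs.divisors.image (fun m : ℕ => -(m:ℤ)))) with hdivF
      have hsub : Dfin.filter (fun v => F v = n) ⊆
          divF.biUnion (fun a => {a} ×ˢ ({a - n / a} ×ˢ Ij (a - n/a))) := by
        intro v hv
        rw [Finset.mem_filter] at hv
        obtain ⟨hvD, hvF⟩ := hv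
        have hvF2 : v.1*(v.1 - v.2.1) = n := hvF
        have hv1 : v.1 ≠ 0 := by
          intro h
          apply huF
          show F u = 0
          rw [← hn, ← hvF2, h]
          ring
        have hdvd : v.1 ∣ n := ⟨v.1 - v.2.1, hvF2.symm⟩
        have hmem1 : v.1 ∈ divF := by
          rw [hdivF]
          have hd : v.1.natAbs ∈ n.natAbs.divisors :=
            Nat.mem_divisors.mpr ⟨Int.natAbs_dvd_natAbs.mpr hdvd, Int.natAbs_ne_zero.mpr huF⟩
          rcases Int.natAbs_eq v.1 with he | he
          · exact Finset.mem_union_left _ (Finset.mem_image.mpr ⟨v.1.natAbs, hd, he.symm⟩)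
          · exact Finset.mem_union_right _ (Finset.mem_image.mpr ⟨v.1.natAbs, hd, he.symm⟩)
        have hkeq : v.2.1 = v.1 - n / v.1 := by
          have h6 : n / v.1 = v.1 - v.2.1 := by
            rw [← hvF2]
            exact Int.mul_ediv_cancel_left _ hv1
          omega
        obtain ⟨_, _, h3⟩ := (hmemD v).mp hvD
        refine Finset.mem_biUnion.mpr ⟨v.1, hmem1, ?_⟩
        exact Finset.mem_product.mpr ⟨Finset.mem_singleton_self _,
          Finset.mem_product.mpr ⟨Finset.mem_singleton.mpr hkeq, by rw [← hkeq]; exact h3⟩⟩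
      have hcard1 : (Dfin.filter (fun v => F v = n)).card ≤ divF.card * Jc := by
        calc (Dfin.filter (fun v => F v = n)).card
            ≤ (divF.biUnion (fun a => {a} ×ˢ ({a - n / a} ×ˢ Ij (a - n/a)))).card :=
              Finset.card_le_card hsub
          _ ≤ ∑ a ∈ divF, ({a} ×ˢ ({a - n / a} ×ˢ Ij (a - n/a))).card :=
              Finset.card_biUnion_le
          _ ≤ ∑ _a ∈ divF, Jc := by
              apply Finset.sum_le_sum
              intro a _
              simp only [Finset.card_product, Finset.card_singleton, one_mul]
              exact hIjcard _
          _ = divF.card * Jc := by rw [Finset.sum_const, smul_eq_mul]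
      have hdivcard : divF.card ≤ 2 * n.natAbs.divisors.card := by
        rw [hdivF]
        calc ((n.natAbs.divisors.image (fun m : ℕ => (m:ℤ))) ∪
              (n.natAbs.divisors.image (fun m : ℕ => -(m:ℤ)))).card
            ≤ (n.natAbs.divisors.image (fun m : ℕ => (m:ℤ))).card +
              (n.natAbs.divisors.image (fun m : ℕ => -(m:ℤ))).card := Finset.card_union_le _ _
          _ ≤ n.natAbs.divisors.card + n.natAbs.divisors.card :=
              Nat.add_le_add Finset.card_image_le Finset.card_image_le
          _ = 2 * n.natAbs.divisors.card := by ring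
      have hnabs : ((n.natAbs : ℕ) : ℝ) ≤ 5*L^2 := by
        obtain ⟨h1, h2, _⟩ := (hmemD u).mp huD
        rw [hIa, Finset.mem_Icc] at h1
        rw [hIk, Finset.mem_Icc] at h2
        have hA1 : ((A:ℤ):ℝ) ≤ Real.sqrt 2 * L := by rw [hA]; exact Int.floor_le _
        have hK1 : ((K:ℤ):ℝ) ≤ 2*Real.sqrt δ*L := by rw [hK]; exact Int.floor_le _
        have hu1 : |(u.1:ℝ)| ≤ Real.sqrt 2 * L := by
          rw [abs_le]
          constructor
          · have h5 : ((-A : ℤ):ℝ) ≤ (u.1:ℝ) := by exact_mod_cast h1.1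
            push_cast at h5
            linarith
          · have h5 : (u.1:ℝ) ≤ ((A:ℤ):ℝ) := by exact_mod_cast h1.2
            linarith
        have hu2 : |(u.2.1:ℝ)| ≤ 2*Real.sqrt δ*L := by
          rw [abs_le]
          constructor
          · have h5 : ((-K : ℤ):ℝ) ≤ (u.2.1:ℝ) := by exact_mod_cast h2.1
            push_cast at h5
            linarith
          · have h5 : (u.2.1:ℝ) ≤ ((K:ℤ):ℝ) := by exact_mod_cast h2.2
            linarith
        have habs : ((n.natAbs : ℕ) : ℝ) = |((n:ℤ):ℝ)| := by
          rw [Nat.cast_natAbs, Int.cast_abs]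
        have hnval : ((n:ℤ):ℝ) = (u.1:ℝ) * ((u.1:ℝ) - (u.2.1:ℝ)) := by
          rw [hn]
          have : F u = u.1*(u.1-u.2.1) := rfl
          rw [this]
          push_cast
          ring
        rw [habs, hnval, abs_mul]
        have hd : |(u.1:ℝ) - (u.2.1:ℝ)| ≤ Real.sqrt 2 * L + 2*Real.sqrt δ*L := by
          calc |(u.1:ℝ) - (u.2.1:ℝ)| ≤ |(u.1:ℝ)| + |(u.2.1:ℝ)| := abs_sub _ _
            _ ≤ Real.sqrt 2 * L + 2*Real.sqrt δ*L := add_le_add hu1 hu2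
        calc |(u.1:ℝ)| * |(u.1:ℝ) - (u.2.1:ℝ)|
            ≤ (Real.sqrt 2 * L) * (Real.sqrt 2 * L + 2*Real.sqrt δ*L) :=
              mul_le_mul hu1 hd (abs_nonneg _) (by positivity)
          _ = 2*L^2 + 2*(Real.sqrt 2*Real.sqrt δ)*L^2 := by linear_combination (L^2)*hs2
          _ ≤ 5*L^2 := by
              have h8 : Real.sqrt 2*Real.sqrt δ ≤ 3/2 := by
                have h8a : Real.sqrt 2*Real.sqrt δ ≤ Real.sqrt 2*1 :=
                  mul_le_mul_of_nonneg_left hsd1 hs20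
                linarith [h8a, hs2le]
              have h9 : (Real.sqrt 2*Real.sqrt δ)*L^2 ≤ (3/2)*L^2 :=
                mul_le_mul_of_nonneg_right h8 (sq_nonneg L)
              linarith [h9]
      have hnabs1 : n.natAbs ≠ 0 := Int.natAbs_ne_zero.mpr huF
      have hτ : ((n.natAbs.divisors.card : ℕ) : ℝ) ≤ Cτ * ((5:ℝ)^(ε/2) * G) := by
        have h1 := hCτ n.natAbs hnabs1
        have h2 : ((n.natAbs : ℕ):ℝ) ^ (ε/2) ≤ (5*L^2) ^ (ε/2) :=
          Real.rpow_le_rpow (by positivity) hnabs (by positivity)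
        have h3 : ((5:ℝ)*L^2) ^ (ε/2) = (5:ℝ)^(ε/2) * (L^2)^(ε/2) :=
          Real.mul_rpow (by norm_num) (by positivity)
        have h4 : ((L:ℝ)^2)^(ε/2) = L ^ ε := by
          rw [← Real.rpow_natCast L 2, ← Real.rpow_mul hL.le]
          congr 1
          push_cast
          ring
        have h5 : L ^ ε ≤ (1+L) ^ ε := Real.rpow_le_rpow hL.le (by linarith) (by positivity)
        have h6 : ((1:ℝ)+L) ^ ε ≤ G := by
          rw [hG]
          have h7 : 1*(1+L) ≤ (N:ℝ)*(1+L) :=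
            mul_le_mul_of_nonneg_right hN1 (by linarith)
          apply Real.rpow_le_rpow (by linarith) (by linarith [h7]) hε.le
        calc ((n.natAbs.divisors.card : ℕ) : ℝ) ≤ Cτ * ((n.natAbs : ℕ):ℝ) ^ (ε/2) := h1
          _ ≤ Cτ * ((5:ℝ)^(ε/2) * (L^2)^(ε/2)) := by
              rw [← h3]
              exact mul_le_mul_of_nonneg_left h2 hCτ0
          _ = Cτ * ((5:ℝ)^(ε/2) * (L ^ ε)) := by rw [h4]
          _ ≤ Cτ * ((5:ℝ)^(ε/2) * G) := by
              apply mul_le_mul_of_nonneg_left _ hCτ0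
              exact mul_le_mul_of_nonneg_left (le_trans h5 h6) h5e.le
      have hc3 : ((Dfin.filter (fun v => F v = n)).card : ℝ) ≤ (divF.card:ℝ) * (Jc:ℝ) := by
        exact_mod_cast hcard1
      have hc4 : (divF.card : ℝ) ≤ 2 * ((n.natAbs.divisors.card:ℕ):ℝ) := by
        exact_mod_cast hdivcard
      have hFBpos : (0:ℝ) ≤ 2 * (Cτ * ((5:ℝ)^(ε/2) * G)) := by
        apply mul_nonneg (by norm_num)
        exact mul_nonneg hCτ0 (mul_nonneg h5e.le hG0)
      calc ((Dfin.filter (fun v => F v = n)).card : ℝ)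
          ≤ (divF.card:ℝ) * (Jc:ℝ) := hc3
        _ ≤ (2 * (Cτ * ((5:ℝ)^(ε/2) * G))) * (Jc:ℝ) := by
            apply mul_le_mul_of_nonneg_right _ hJc0
            calc (divF.card : ℝ) ≤ 2 * ((n.natAbs.divisors.card:ℕ):ℝ) := hc4
              _ ≤ 2 * (Cτ * ((5:ℝ)^(ε/2) * G)) := by linarith
        _ ≤ (2 * (Cτ * ((5:ℝ)^(ε/2) * G))) * (2*T+1) :=
            mul_le_mul_of_nonneg_left hJcR hFBpos
    -- data extraction for a single matrix
    have hsq2 : (Real.sqrt 2*L)^2 = 2*L^2 := by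
      rw [mul_pow, Real.sq_sqrt (by norm_num : (0:ℝ) ≤ 2)]
    have hsqd : (2*Real.sqrt δ*L)^2 = 4*δ*L^2 := by
      have h : (2*Real.sqrt δ*L)^2 = 4*(Real.sqrt δ*Real.sqrt δ)*L^2 := by ring
      rw [h, hsd]
    have hdata : ∀ γ : M2, γ ∈ Rlat N ℓ → γ 1 0 = 0 → g⁻¹ * γ * g ∈ OmegaStar δ L →
        φ γ ∈ Dfin ∧ γ.det = ((F (φ γ) : ℤ) : ℝ) ∧
        γ = !![((⌊γ 0 0⌋:ℤ):ℝ), ((⌊(ℓ:ℝ)*γ 0 1⌋:ℤ):ℝ)/(ℓ:ℝ); 0, ((⌊γ 1 1⌋:ℤ):ℝ)] := by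
      intro γ h1 h2 h3
      obtain ⟨i1, i4, i2, q1, q4, qk, qj, qdet, _qnz⟩ := hkey γ h1 h2 h3
      have hka : ((⌊γ 0 0⌋ - ⌊γ 1 1⌋ : ℤ) : ℝ) = γ 0 0 - γ 1 1 := by
        push_cast
        rw [← i1, ← i4]
      have haIa : ⌊γ 0 0⌋ ∈ Ia := by
        rw [hIa, Finset.mem_Icc]
        have hsq : ((⌊γ 0 0⌋:ℤ):ℝ)^2 ≤ (Real.sqrt 2*L)^2 := by rw [hsq2, ← i1]; exact q1
        obtain ⟨hlo, hhi⟩ := int_abs_le_of_sq_le _ (Real.sqrt 2*L) hsq (by positivity)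
        constructor
        · rw [show -A = ⌈-(Real.sqrt 2*L)⌉ by rw [hA, Int.ceil_neg]]
          exact Int.ceil_le.mpr (by push_cast; linarith)
        · exact Int.le_floor.mpr hhi
      have hkIk : ⌊γ 0 0⌋ - ⌊γ 1 1⌋ ∈ Ik := by
        rw [hIk, Finset.mem_Icc]
        have hsq : ((⌊γ 0 0⌋ - ⌊γ 1 1⌋:ℤ):ℝ)^2 ≤ (2*Real.sqrt δ*L)^2 := by
          rw [hsqd, hka]
          exact qk
        obtain ⟨hlo, hhi⟩ := int_abs_le_of_sq_le _ (2*Real.sqrt δ*L) hsq (by positivity)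
        constructor
        · rw [show -K = ⌈-(2*Real.sqrt δ*L)⌉ by rw [hK, Int.ceil_neg]]
          exact Int.ceil_le.mpr (by push_cast; linarith)
        · exact Int.le_floor.mpr hhi
      have hjI : ⌊(ℓ:ℝ)*γ 0 1⌋ ∈ Ij (⌊γ 0 0⌋ - ⌊γ 1 1⌋) := by
        rw [hIj, Finset.mem_Icc]
        have hqj2 : |((⌊(ℓ:ℝ)*γ 0 1⌋:ℤ):ℝ) + (ℓ:ℝ)*((⌊γ 0 0⌋ - ⌊γ 1 1⌋:ℤ):ℝ)*x| ≤ T := by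
          rw [hka, ← i2]
          exact qj
        rw [abs_le] at hqj2
        constructor
        · exact Int.ceil_le.mpr (by linarith [hqj2.2])
        · exact Int.le_floor.mpr (by linarith [hqj2.1])
      refine ⟨(hmemD (φ γ)).mpr ⟨haIa, hkIk, hjI⟩, ?_, ?_⟩
      · have h5 : F (φ γ) = ⌊γ 0 0⌋ * ⌊γ 1 1⌋ := by
          show ⌊γ 0 0⌋ * (⌊γ 0 0⌋ - (⌊γ 0 0⌋ - ⌊γ 1 1⌋)) = ⌊γ 0 0⌋ * ⌊γ 1 1⌋
          ring
        rw [h5]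
        push_cast
        rw [← i1, ← i4]
        exact qdet
      · have hγ01 : γ 0 1 = ((⌊(ℓ:ℝ)*γ 0 1⌋:ℤ):ℝ)/(ℓ:ℝ) := by
          rw [← i2]
          field_simp
        ext i' j'
        fin_cases i' <;> fin_cases j' <;>
          simp only [Matrix.cons_val', Matrix.cons_val_zero, Matrix.cons_val_one,
            Matrix.head_cons, Matrix.head_fin_const, Matrix.empty_val',
            Matrix.cons_val_fin_one]
        · exact i1
        · exact hγ01
        · exact h2
        · exact i4
    have hΦim : Φ '' S ⊆ ↑Pfin := by
      rintro _ ⟨p, hp, rfl⟩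
      rw [hS, Set.mem_setOf_eq] at hp
      obtain ⟨m1, m2, m3, m4, m5, m6, m7⟩ := hp
      obtain ⟨dm1, dd1, _⟩ := hdata p.1 m1 m3 m5
      obtain ⟨dm2, dd2, _⟩ := hdata p.2 m2 m4 m6
      rw [Finset.mem_coe, hPfin, Finset.mem_filter, Finset.mem_product]
      refine ⟨⟨dm1, dm2⟩, ?_⟩
      show F (φ p.1) = F (φ p.2)
      have hcast : ((F (φ p.1) : ℤ) : ℝ) = ((F (φ p.2) : ℤ) : ℝ) := by
        rw [← dd1, ← dd2]
        exact m7
      exact_mod_cast hcast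
    have hinj : Set.InjOn Φ S := by
      intro p hp q hq he
      rw [hS, Set.mem_setOf_eq] at hp hq
      obtain ⟨m1, m2, m3, m4, m5, m6, _⟩ := hp
      obtain ⟨n1, n2, n3, n4, n5, n6, _⟩ := hq
      obtain ⟨_, _, dr1⟩ := hdata p.1 m1 m3 m5
      obtain ⟨_, _, dr2⟩ := hdata p.2 m2 m4 m6
      obtain ⟨_, _, er1⟩ := hdata q.1 n1 n3 n5
      obtain ⟨_, _, er2⟩ := hdata q.2 n2 n4 n6
      have he1 : φ p.1 = φ q.1 := congrArg Prod.fst he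
      have he2 : φ p.2 = φ q.2 := congrArg Prod.snd he
      have h00a : ⌊p.1 0 0⌋ = ⌊q.1 0 0⌋ := congrArg Prod.fst he1
      have h00k : ⌊p.1 0 0⌋ - ⌊p.1 1 1⌋ = ⌊q.1 0 0⌋ - ⌊q.1 1 1⌋ :=
        congrArg (fun z => z.2.1) he1
      have h00j : ⌊(ℓ:ℝ)*p.1 0 1⌋ = ⌊(ℓ:ℝ)*q.1 0 1⌋ := congrArg (fun z => z.2.2) he1
      have h11a : ⌊p.2 0 0⌋ = ⌊q.2 0 0⌋ := congrArg Prod.fst he2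
      have h11k : ⌊p.2 0 0⌋ - ⌊p.2 1 1⌋ = ⌊q.2 0 0⌋ - ⌊q.2 1 1⌋ :=
        congrArg (fun z => z.2.1) he2
      have h11j : ⌊(ℓ:ℝ)*p.2 0 1⌋ = ⌊(ℓ:ℝ)*q.2 0 1⌋ := congrArg (fun z => z.2.2) he2
      have h00d : ⌊p.1 1 1⌋ = ⌊q.1 1 1⌋ := by omega
      have h11d : ⌊p.2 1 1⌋ = ⌊q.2 1 1⌋ := by omega
      have hp1 : p.1 = q.1 := by rw [dr1, er1, h00a, h00d, h00j]
      have hp2 : p.2 = q.2 := by rw [dr2, er2, h11a, h11d, h11j]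
      exact Prod.ext hp1 hp2
    have hfinS : S.Finite :=
      Set.Finite.of_finite_image (Set.Finite.subset Pfin.finite_toSet hΦim) hinj
    have hncard : (S.ncard : ℝ) ≤ (Pfin.card : ℝ) := by
      have h1 : (Φ '' S).ncard = S.ncard := Set.ncard_image_of_injOn hinj
      have h2 : (Φ '' S).ncard ≤ (↑Pfin : Set ((ℤ×ℤ×ℤ)×(ℤ×ℤ×ℤ))).ncard :=
        Set.ncard_le_ncard hΦim Pfin.finite_toSet
      rw [Set.ncard_coe_finset] at h2
      rw [← h1]
      exact_mod_cast h2
    set FB : ℝ := 2 * (Cτ * ((5:ℝ)^(ε/2) * G)) * (2*T+1) with hFB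
    have hFB0 : (0:ℝ) ≤ FB := by
      rw [hFB]
      apply mul_nonneg _ (by linarith)
      apply mul_nonneg (by norm_num)
      exact mul_nonneg hCτ0 (mul_nonneg h5e.le hG0)
    have hPR : (Pfin.card : ℝ) ≤ (D0.card:ℝ)*(D0.card:ℝ) + (Dfin.card:ℝ) * FB := by
      have hcsplit : (Pfin.filter (fun w => F w.1 = 0)).card +
          (Pfin.filter (fun w => ¬ F w.1 = 0)).card = Pfin.card :=
        Finset.card_filter_add_card_filter_not _
      have r1 : ((Pfin.filter (fun w => F w.1 = 0)).card : ℝ) ≤ (D0.card:ℝ)*(D0.card:ℝ) := by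
        have hsub1 : Pfin.filter (fun w => F w.1 = 0) ⊆ D0 ×ˢ D0 := by
          intro w hw
          rw [Finset.mem_filter] at hw
          obtain ⟨hwP, hw0⟩ := hw
          rw [hPfin, Finset.mem_filter, Finset.mem_product] at hwP
          obtain ⟨⟨w1D, w2D⟩, heqF⟩ := hwP
          rw [Finset.mem_product]
          constructor
          · rw [hD0, Finset.mem_filter]
            exact ⟨w1D, hw0⟩
          · rw [hD0, Finset.mem_filter]
            exact ⟨w2D, by rw [← heqF]; exact hw0⟩
        have h4 := Finset.card_le_card hsub1
        rw [Finset.card_product] at h4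
        exact_mod_cast h4
      have r2 : ((Pfin.filter (fun w => ¬ F w.1 = 0)).card : ℝ) ≤ (Dfin.card:ℝ) * FB := by
        set D1 : Finset (ℤ×ℤ×ℤ) := Dfin.filter (fun u => ¬ F u = 0) with hD1
        have hsub2 : Pfin.filter (fun w => ¬ F w.1 = 0) ⊆
            D1.biUnion (fun u => {u} ×ˢ (Dfin.filter (fun v => F v = F u))) := by
          intro w hw
          rw [Finset.mem_filter] at hw
          obtain ⟨hwP, hw0⟩ := hw
          rw [hPfin, Finset.mem_filter, Finset.mem_product] at hwP
          obtain ⟨⟨w1D, w2D⟩, heqF⟩ := hwP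
          refine Finset.mem_biUnion.mpr ⟨w.1, ?_, ?_⟩
          · rw [hD1, Finset.mem_filter]
            exact ⟨w1D, hw0⟩
          · rw [Finset.mem_product]
            exact ⟨Finset.mem_singleton.mpr rfl, Finset.mem_filter.mpr ⟨w2D, heqF.symm⟩⟩
        have hn1 : (Pfin.filter (fun w => ¬ F w.1 = 0)).card ≤
            ∑ u ∈ D1, (Dfin.filter (fun v => F v = F u)).card := by
          calc (Pfin.filter (fun w => ¬ F w.1 = 0)).card
              ≤ (D1.biUnion (fun u => {u} ×ˢ (Dfin.filter (fun v => F v = F u)))).card :=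
                Finset.card_le_card hsub2
            _ ≤ ∑ u ∈ D1, ({u} ×ˢ (Dfin.filter (fun v => F v = F u))).card :=
                Finset.card_biUnion_le
            _ = ∑ u ∈ D1, (Dfin.filter (fun v => F v = F u)).card := by
                apply Finset.sum_congr rfl
                intro u _
                simp only [Finset.card_product, Finset.card_singleton, one_mul]
        have hr : ((Pfin.filter (fun w => ¬ F w.1 = 0)).card : ℝ) ≤
            ∑ u ∈ D1, ((Dfin.filter (fun v => F v = F u)).card : ℝ) := by
          exact_mod_cast hn1
        have hr2 : ∑ u ∈ D1, ((Dfin.filter (fun v => F v = F u)).card : ℝ) ≤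
            ∑ _u ∈ D1, FB := by
          apply Finset.sum_le_sum
          intro u hu
          rw [hD1, Finset.mem_filter] at hu
          exact hfibR u hu.1 hu.2
        have hr3 : (∑ _u ∈ D1, FB) = (D1.card : ℝ) * FB := by
          rw [Finset.sum_const, nsmul_eq_mul]
        have hr4 : (D1.card : ℝ) ≤ (Dfin.card : ℝ) := by
          exact_mod_cast Finset.card_le_card (Finset.filter_subset _ _)
        calc ((Pfin.filter (fun w => ¬ F w.1 = 0)).card : ℝ)
            ≤ ∑ u ∈ D1, ((Dfin.filter (fun v => F v = F u)).card : ℝ) := hr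
          _ ≤ ∑ _u ∈ D1, FB := hr2
          _ = (D1.card : ℝ) * FB := hr3
          _ ≤ (Dfin.card : ℝ) * FB := mul_le_mul_of_nonneg_right hr4 hFB0
      have h5 : (Pfin.card : ℝ) = ((Pfin.filter (fun w => F w.1 = 0)).card : ℝ) +
          ((Pfin.filter (fun w => ¬ F w.1 = 0)).card : ℝ) := by
        exact_mod_cast hcsplit.symm
      rw [h5]
      linarith
    -- final numeric bounds
    have hb1 : (D0.card:ℝ)*(D0.card:ℝ) ≤ 4096*((ℓ:ℝ)*L^2*Vp) := by
      have hsdL : (Real.sqrt δ*L)*(Real.sqrt δ*L) = δ*L^2 := by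
        rw [show Real.sqrt δ*L*(Real.sqrt δ*L) = (Real.sqrt δ*Real.sqrt δ)*L^2 by ring, hsd]
      have ht10 : (0:ℝ) ≤ 2*T+1 := by linarith
      have ha10 : (0:ℝ) ≤ 2*(2*Real.sqrt δ*L)+1 := by positivity
      have m1 : (2*(2*Real.sqrt δ*L)+1)*(2*(2*Real.sqrt δ*L)+1) ≤ 32*(δ*L^2)+2 := by
        linarith [sq_bound1 (Real.sqrt δ*L), hsdL]
      have m2 : (2*T+1)*(2*T+1) ≤ 8*T^2+2 := sq_bound2 T
      have hD00 : (0:ℝ) ≤ (D0.card:ℝ) := by positivity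
      have hD0sq : (D0.card:ℝ)*(D0.card:ℝ) ≤
          (2*((2*(2*Real.sqrt δ*L)+1)*(2*T+1)))*(2*((2*(2*Real.sqrt δ*L)+1)*(2*T+1))) :=
        mul_le_mul hD0R hD0R hD00 (by linarith [mul_nonneg ha10 ht10])
      have hprod : ((2*(2*Real.sqrt δ*L)+1)*(2*T+1))*((2*(2*Real.sqrt δ*L)+1)*(2*T+1)) ≤
          (32*(δ*L^2)+2)*(8*T^2+2) := by
        calc ((2*(2*Real.sqrt δ*L)+1)*(2*T+1))*((2*(2*Real.sqrt δ*L)+1)*(2*T+1))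
            = ((2*(2*Real.sqrt δ*L)+1)*(2*(2*Real.sqrt δ*L)+1))*((2*T+1)*(2*T+1)) := by ring
          _ ≤ (32*(δ*L^2)+2)*(8*T^2+2) :=
              mul_le_mul m1 m2 (mul_nonneg ht10 ht10) (by positivity)
      have c1 : δ*L^2 ≤ (ℓ:ℝ)*L^2 :=
        mul_le_mul_of_nonneg_right (show δ ≤ (ℓ:ℝ) by linarith) (sq_nonneg L)
      have c2 : (1:ℝ) ≤ 2*((ℓ:ℝ)*L^2) := by
        have d5' : 1*L^2 ≤ (ℓ:ℝ)*L^2 := mul_le_mul_of_nonneg_right hl1 (sq_nonneg L)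
        linarith [hbig, d5']
      have c3 : (ℓ:ℝ)^2*y^2*(δ*δ)*L^4 ≤ (ℓ:ℝ)^2*y^2*δ^((3:ℝ)/2)*L^4 := by
        linarith [mul_le_mul_of_nonneg_left hdsq
          (show (0:ℝ) ≤ (ℓ:ℝ)^2*y^2*L^4 by positivity)]
      have c4 : (0:ℝ) ≤ (ℓ:ℝ)^2*y^2*δ*L^3 := by positivity
      have c5 : (0:ℝ) ≤ (ℓ:ℝ)^2*y^2*δ*L^2 := by positivity
      calc (D0.card:ℝ)*(D0.card:ℝ)
          ≤ (2*((2*(2*Real.sqrt δ*L)+1)*(2*T+1)))*(2*((2*(2*Real.sqrt δ*L)+1)*(2*T+1))) :=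
            hD0sq
        _ = 4*(((2*(2*Real.sqrt δ*L)+1)*(2*T+1))*((2*(2*Real.sqrt δ*L)+1)*(2*T+1))) := by
            ring
        _ ≤ 4*((32*(δ*L^2)+2)*(8*T^2+2)) := by linarith
        _ ≤ 4096*((ℓ:ℝ)*L^2*Vp) := by
            rw [hVp, hTsq]
            have c6 : (0:ℝ) ≤ (ℓ:ℝ)*L^2 := by positivity
            linarith [c1, c2, c3, c4, c5, c6]
    have hb2 : (Dfin.card:ℝ) * FB ≤ 1800*Cτ*((5:ℝ)^(ε/2))*G*((ℓ:ℝ)*L^2*Vp) := by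
      have ht10 : (0:ℝ) ≤ 2*T+1 := by linarith
      have c4 : 2*(Real.sqrt 2*L)+1 ≤ 5*L := by
        have t1 : Real.sqrt 2*L ≤ (3/2)*L := mul_le_mul_of_nonneg_right hs2le hL.le
        linarith [hs2L1, t1, hL.le]
      have m2' : (2*T+1)*(2*T+1) ≤ 8*T^2+2 := sq_bound2 T
      have hE : (2*(Real.sqrt 2*L)+1)*((2*(2*Real.sqrt δ*L)+1)*(2*T+1))*(2*T+1) ≤
          900*((ℓ:ℝ)*L^2*Vp) := by
        have d1 : Real.sqrt δ*L^2*T^2 = 4*(ℓ:ℝ)^2*y^2*δ^((3:ℝ)/2)*L^4 := by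
          rw [hTsq]
          linear_combination (4*(ℓ:ℝ)^2*y^2*L^4)*hd32
        have d2 : L*T^2 = 4*(ℓ:ℝ)^2*y^2*δ*L^3 := by rw [hTsq]; ring
        have d3 : Real.sqrt δ*L^2 ≤ (ℓ:ℝ)*L^2 :=
          mul_le_mul_of_nonneg_right (show Real.sqrt δ ≤ (ℓ:ℝ) by linarith) (sq_nonneg L)
        have d4 : L ≤ (3/2)*L^2 := by
          have t1 : Real.sqrt 2*L ≤ (3/2)*L := mul_le_mul_of_nonneg_right hs2le hL.le
          have t2 : (1:ℝ) ≤ (3/2)*L := le_trans hs2L1 t1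
          have t3 : 1*L ≤ ((3/2)*L)*L := mul_le_mul_of_nonneg_right t2 hL.le
          linarith [t3]
        have d5 : 1*L^2 ≤ (ℓ:ℝ)*L^2 := mul_le_mul_of_nonneg_right hl1 (sq_nonneg L)
        have d6 : (0:ℝ) ≤ (ℓ:ℝ)^2*y^2*δ*L^2 := by positivity
        have e1 : (2*(2*Real.sqrt δ*L)+1)*((2*T+1)*(2*T+1)) ≤
            (2*(2*Real.sqrt δ*L)+1)*(8*T^2+2) :=
          mul_le_mul_of_nonneg_left m2' (by positivity)
        have e2 : (2*(Real.sqrt 2*L)+1)*((2*(2*Real.sqrt δ*L)+1)*(8*T^2+2)) ≤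
            (5*L)*((2*(2*Real.sqrt δ*L)+1)*(8*T^2+2)) := by
          apply mul_le_mul_of_nonneg_right c4
          have : (0:ℝ) ≤ 8*T^2+2 := by positivity
          positivity
        calc (2*(Real.sqrt 2*L)+1)*((2*(2*Real.sqrt δ*L)+1)*(2*T+1))*(2*T+1)
            = (2*(Real.sqrt 2*L)+1)*((2*(2*Real.sqrt δ*L)+1)*((2*T+1)*(2*T+1))) := by ring
          _ ≤ (2*(Real.sqrt 2*L)+1)*((2*(2*Real.sqrt δ*L)+1)*(8*T^2+2)) :=
              mul_le_mul_of_nonneg_left e1 (by positivity)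
          _ ≤ (5*L)*((2*(2*Real.sqrt δ*L)+1)*(8*T^2+2)) := e2
          _ ≤ 900*((ℓ:ℝ)*L^2*Vp) := by
              rw [hVp]
              have d7 : (0:ℝ) ≤ (ℓ:ℝ)*L^2 := by positivity
              have d8 : (0:ℝ) ≤ (ℓ:ℝ)^2*y^2*δ*L^3 := by positivity
              have d9 : (0:ℝ) ≤ (ℓ:ℝ)^2*y^2*δ^((3:ℝ)/2)*L^4 := by positivity
              linarith [d1, d2, d3, d4, d5, d6, d7, d8, d9]
      have hstep : (Dfin.card:ℝ)*FB ≤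
          ((2*(Real.sqrt 2*L)+1)*(2*(2*Real.sqrt δ*L)+1)*(2*T+1))*FB :=
        mul_le_mul_of_nonneg_right hDR hFB0
      have hid : ((2*(Real.sqrt 2*L)+1)*(2*(2*Real.sqrt δ*L)+1)*(2*T+1))*FB =
          (2*Cτ*((5:ℝ)^(ε/2))*G)*
            ((2*(Real.sqrt 2*L)+1)*((2*(2*Real.sqrt δ*L)+1)*(2*T+1))*(2*T+1)) := by
        rw [hFB]
        ring
      have hcoef : (0:ℝ) ≤ 2*Cτ*((5:ℝ)^(ε/2))*G := by
        apply mul_nonneg _ hG0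
        apply mul_nonneg _ h5e.le
        linarith
      calc (Dfin.card:ℝ)*FB
          ≤ ((2*(Real.sqrt 2*L)+1)*(2*(2*Real.sqrt δ*L)+1)*(2*T+1))*FB := hstep
        _ = (2*Cτ*((5:ℝ)^(ε/2))*G)*
              ((2*(Real.sqrt 2*L)+1)*((2*(2*Real.sqrt δ*L)+1)*(2*T+1))*(2*T+1)) := hid
        _ ≤ (2*Cτ*((5:ℝ)^(ε/2))*G)*(900*((ℓ:ℝ)*L^2*Vp)) :=
            mul_le_mul_of_nonneg_left hE hcoef
        _ = 1800*Cτ*((5:ℝ)^(ε/2))*G*((ℓ:ℝ)*L^2*Vp) := by ring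
    refine ⟨hfinS, ?_⟩
    have hLLVp : (0:ℝ) ≤ (ℓ:ℝ)*L^2*Vp := by
      apply mul_nonneg _ hVp0
      positivity
    have h2 : 4096*((ℓ:ℝ)*L^2*Vp) ≤ 4096*G*((ℓ:ℝ)*L^2*Vp) := by
      have hx : (0:ℝ) ≤ 4096*((ℓ:ℝ)*L^2*Vp) := by linarith
      have hmono : (4096*((ℓ:ℝ)*L^2*Vp)) * 1 ≤ (4096*((ℓ:ℝ)*L^2*Vp)) * G :=
        mul_le_mul_of_nonneg_left hG1 hx
      linarith [hmono]
    have h3 : C * G * ((ℓ:ℝ)*L^2) * Vp =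
        4096*G*((ℓ:ℝ)*L^2*Vp) + 1800*Cτ*((5:ℝ)^(ε/2))*G*((ℓ:ℝ)*L^2*Vp) := by
      rw [hC]
      ring
    calc (S.ncard : ℝ) ≤ (Pfin.card : ℝ) := hncard
      _ ≤ (D0.card:ℝ)*(D0.card:ℝ) + (Dfin.card:ℝ) * FB := hPR
      _ ≤ 4096*((ℓ:ℝ)*L^2*Vp) + 1800*Cτ*((5:ℝ)^(ε/2))*G*((ℓ:ℝ)*L^2*Vp) :=
          add_le_add hb1 hb2
      _ ≤ C * G * ((ℓ:ℝ)*L^2) * Vp := by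
          rw [h3]
          exact add_le_add h2 (le_refl _)
  · -- ============ SMALL CASE : 2 L^2 < 1 ============
    have hz : ∀ r : ℝ, r = ((⌊r⌋:ℤ):ℝ) → r^2 ≤ 2*L^2 → r = 0 := by
      intro r hr hr2
      by_contra hne
      have h0 : ⌊r⌋ ≠ 0 := by
        intro h
        rw [h] at hr
        simp at hr
        exact hne hr
      have h1 : (1:ℤ) ≤ |⌊r⌋| := Int.one_le_abs h0
      have h2 : (1:ℝ) ≤ |r| := by
        rw [hr, ← Int.cast_abs]
        exact_mod_cast h1
      have h3 : 1*1 ≤ |r| * |r| := mul_le_mul h2 h2 zero_le_one (abs_nonneg r)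
      have h4 : |r|^2 = r^2 := sq_abs r
      linarith [h3, h4, hr2, hsmall]
    set Z : Finset ℤ := (Finset.Icc (-⌊T⌋) ⌊T⌋).erase 0 with hZ
    set Ψ : M2×M2 → ℤ×ℤ := fun p => (⌊(ℓ:ℝ)*p.1 0 1⌋, ⌊(ℓ:ℝ)*p.2 0 1⌋) with hΨ
    have hzero : ∀ γ : M2, γ ∈ Rlat N ℓ → γ 1 0 = 0 → g⁻¹ * γ * g ∈ OmegaStar δ L →
        γ = !![0, ((⌊(ℓ:ℝ)*γ 0 1⌋:ℤ):ℝ)/(ℓ:ℝ); 0, 0] ∧ ⌊(ℓ:ℝ)*γ 0 1⌋ ∈ Z := by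
      intro γ h1 h2 h3
      obtain ⟨i1, i4, i2, q1, q4, _qk, qj, _qdet, qnz⟩ := hkey γ h1 h2 h3
      have hz1 : γ 0 0 = 0 := hz _ i1 q1
      have hz4 : γ 1 1 = 0 := hz _ i4 q4
      have hj : |((⌊(ℓ:ℝ)*γ 0 1⌋:ℤ):ℝ)| ≤ T := by
        rw [← i2]
        have h5 := qj
        rw [hz1, hz4] at h5
        simpa using h5
      have hjne : ⌊(ℓ:ℝ)*γ 0 1⌋ ≠ 0 := by
        intro h
        apply qnz
        refine ⟨hz1, hz4, ?_⟩
        have h6 : (ℓ:ℝ)*γ 0 1 = 0 := by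
          rw [i2, h]
          norm_num
        rcases mul_eq_zero.mp h6 with h7 | h7
        · exact absurd h7 (ne_of_gt hlR)
        · exact h7
      have hγ01 : γ 0 1 = ((⌊(ℓ:ℝ)*γ 0 1⌋:ℤ):ℝ)/(ℓ:ℝ) := by
        rw [← i2]
        field_simp
      constructor
      · ext i' j'
        fin_cases i' <;> fin_cases j' <;>
          simp only [Matrix.cons_val', Matrix.cons_val_zero, Matrix.cons_val_one,
            Matrix.head_cons, Matrix.head_fin_const, Matrix.empty_val',
            Matrix.cons_val_fin_one]
        · exact hz1
        · exact hγ01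
        · exact h2
        · exact hz4
      · rw [hZ]
        rw [abs_le] at hj
        refine Finset.mem_erase.mpr ⟨hjne, Finset.mem_Icc.mpr ⟨?_, ?_⟩⟩
        · rw [show -⌊T⌋ = ⌈-T⌉ by rw [Int.ceil_neg]]
          exact Int.ceil_le.mpr (by linarith [hj.1])
        · exact Int.le_floor.mpr (by linarith [hj.2])
    have hΨim : Ψ '' S ⊆ ↑(Z ×ˢ Z) := by
      rintro _ ⟨p, hp, rfl⟩
      rw [hS, Set.mem_setOf_eq] at hp
      obtain ⟨m1, m2, m3, m4, m5, m6, _⟩ := hp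
      obtain ⟨_, hm1⟩ := hzero p.1 m1 m3 m5
      obtain ⟨_, hm2⟩ := hzero p.2 m2 m4 m6
      rw [Finset.mem_coe, Finset.mem_product]
      exact ⟨hm1, hm2⟩
    have hinj : Set.InjOn Ψ S := by
      intro p hp q hq he
      rw [hS, Set.mem_setOf_eq] at hp hq
      obtain ⟨m1, m2, m3, m4, m5, m6, _⟩ := hp
      obtain ⟨n1, n2, n3, n4, n5, n6, _⟩ := hq
      obtain ⟨dr1, _⟩ := hzero p.1 m1 m3 m5
      obtain ⟨dr2, _⟩ := hzero p.2 m2 m4 m6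
      obtain ⟨er1, _⟩ := hzero q.1 n1 n3 n5
      obtain ⟨er2, _⟩ := hzero q.2 n2 n4 n6
      have he1 : ⌊(ℓ:ℝ)*p.1 0 1⌋ = ⌊(ℓ:ℝ)*q.1 0 1⌋ := congrArg Prod.fst he
      have he2 : ⌊(ℓ:ℝ)*p.2 0 1⌋ = ⌊(ℓ:ℝ)*q.2 0 1⌋ := congrArg Prod.snd he
      have hp1 : p.1 = q.1 := by rw [dr1, er1, he1]
      have hp2 : p.2 = q.2 := by rw [dr2, er2, he2]
      exact Prod.ext hp1 hp2
    have hfinS : S.Finite :=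
      Set.Finite.of_finite_image (Set.Finite.subset (Z ×ˢ Z).finite_toSet hΨim) hinj
    refine ⟨hfinS, ?_⟩
    have hncard : (S.ncard : ℝ) ≤ ((Z ×ˢ Z).card : ℝ) := by
      have h1 : (Ψ '' S).ncard = S.ncard := Set.ncard_image_of_injOn hinj
      have h2 : (Ψ '' S).ncard ≤ (↑(Z ×ˢ Z) : Set (ℤ×ℤ)).ncard :=
        Set.ncard_le_ncard hΨim (Z ×ˢ Z).finite_toSet
      rw [Set.ncard_coe_finset] at h2
      rw [← h1]
      exact_mod_cast h2
    have hZR : (Z.card : ℝ) ≤ 2*T := by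
      have h0 : (0:ℤ) ≤ ⌊T⌋ := Int.le_floor.mpr (by push_cast; linarith)
      have hmem : (0:ℤ) ∈ Finset.Icc (-⌊T⌋) ⌊T⌋ := Finset.mem_Icc.mpr ⟨by omega, h0⟩
      rw [hZ, Finset.card_erase_of_mem hmem, Int.card_Icc]
      have h2 : (⌊T⌋+1-(-⌊T⌋)) = 2*⌊T⌋+1 := by ring
      rw [h2]
      have h3 : ((2*⌊T⌋+1).toNat : ℤ) = 2*⌊T⌋+1 := Int.toNat_of_nonneg (by omega)
      have h4 : 1 ≤ (2*⌊T⌋+1).toNat := by omega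
      have h5 : (((2*⌊T⌋+1).toNat - 1 : ℕ) : ℝ) = (((2*⌊T⌋+1).toNat : ℕ) : ℝ) - 1 := by
        rw [Nat.cast_sub h4]
        norm_num
      rw [h5]
      have h6 : (((2*⌊T⌋+1).toNat : ℕ) : ℝ) = 2*((⌊T⌋:ℤ):ℝ)+1 := by exact_mod_cast h3
      rw [h6]
      have h7 := Int.floor_le T
      linarith
    have hZ0 : (0:ℝ) ≤ (Z.card : ℝ) := by positivity
    have hprod : ((Z ×ˢ Z).card : ℝ) ≤ (2*T)*(2*T) := by
      rw [Finset.card_product]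
      push_cast
      exact mul_le_mul hZR hZR hZ0 (by linarith)
    have hTT : (2*T)*(2*T) = 16*(((ℓ:ℝ)*L^2)*((ℓ:ℝ)*y^2*δ)) := by
      rw [hT]
      linear_combination (16*(ℓ:ℝ)^2*y^2*L^2)*hsd
    have hVpW : (ℓ:ℝ)*y^2*δ ≤ Vp := by
      rw [hVp]
      linarith [hVterm2, hVterm3]
    have hLL0 : (0:ℝ) ≤ (ℓ:ℝ)*L^2 := by positivity
    calc (S.ncard : ℝ) ≤ ((Z ×ˢ Z).card : ℝ) := hncard
      _ ≤ (2*T)*(2*T) := hprod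
      _ = 16*(((ℓ:ℝ)*L^2)*((ℓ:ℝ)*y^2*δ)) := hTT
      _ ≤ 16*(((ℓ:ℝ)*L^2)*Vp) := by
          apply mul_le_mul_of_nonneg_left _ (by norm_num)
          exact mul_le_mul_of_nonneg_left hVpW hLL0
      _ ≤ C*(((ℓ:ℝ)*L^2)*Vp) := by
          apply mul_le_mul_of_nonneg_right hC16
          exact mul_nonneg hLL0 hVp0
      _ ≤ C*G*(((ℓ:ℝ)*L^2)*Vp) := by
          have hx : (0:ℝ) ≤ C*(((ℓ:ℝ)*L^2)*Vp) :=
            mul_nonneg (by linarith) (mul_nonneg hLL0 hVp0)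
          have hmono : (C*(((ℓ:ℝ)*L^2)*Vp)) * 1 ≤ (C*(((ℓ:ℝ)*L^2)*Vp)) * G :=
            mul_le_mul_of_nonneg_left hG1 hx
          linarith [hmono]
      _ = C * G * ((ℓ:ℝ)*L^2) * Vp := by ring
end
end
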